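/- arXiv:2510.25582 — 14 statements merged into one kernel-verified Lean document; each statement's English description precedes it below -/
import Mathlib

section
/- Let X = (x_i)_{i≥0} be a bidding strategy with x_0 ≥ 1. Then its competitive ratio satisfies sup_{u≥1} cost(X,u)/u = max( x_0 , sup_{i≥0} (Σ_{j=0}^{i+1} x_j)/x_i ). In particular, for any r ≥ 1, X has competitive ratio at most r if and only if x_0 ≤ r and x_{i+1} ≤ r·x_i − Σ_{j=0}^{i} x_j for all i ≥ 0. -/
/-- The least index `i` such that the bid `X i` reaches the target `u`. -/
noncomputable def costIdx (X : ℕ → ℝ) (u : ℝ) : ℕ := sInf {i : ℕ | u ≤ X i}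

/-- The cost of bidding strategy `X` on target `u`: the sum of bids up to and
including the first bid that is at least `u`. -/
noncomputable def cost (X : ℕ → ℝ) (u : ℝ) : ℝ :=
  ∑ j ∈ Finset.range (costIdx X u + 1), X j

/-- A bidding strategy: a strictly increasing sequence of positive reals tending to infinity. -/
def IsBiddingStrategy (X : ℕ → ℝ) : Prop :=
  StrictMono X ∧ (∀ i, 0 < X i) ∧ Filter.Tendsto X Filter.atTop Filter.atTop

namespace BidAux

variable {X : ℕ → ℝ}

lemma set_nonempty (hX : IsBiddingStrategy X) (u : ℝ) : {i : ℕ | u ≤ X i}.Nonempty := by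
  obtain ⟨i, hi⟩ := (hX.2.2.eventually_ge_atTop u).exists
  exact ⟨i, hi⟩

lemma costIdx_mem (hX : IsBiddingStrategy X) (u : ℝ) : u ≤ X (costIdx X u) :=
  Nat.sInf_mem (set_nonempty hX u)

lemma cost_of_le {u : ℝ} (h : u ≤ X 0) : cost X u = X 0 := by
  have h0 : costIdx X u = 0 := Nat.sInf_eq_zero.mpr (Or.inl h)
  simp [cost, h0]

lemma cost_of_lt (hX : IsBiddingStrategy X) {u : ℝ} {i : ℕ}
    (hlt : X i < u) (hle : u ≤ X (i + 1)) :
    cost X u = ∑ j ∈ Finset.range (i + 2), X j := by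
  have hidx : costIdx X u = i + 1 := by
    refine le_antisymm (Nat.sInf_le hle) ?_
    by_contra h
    push_neg at h
    have hmem := costIdx_mem hX u
    have : X (costIdx X u) ≤ X i := hX.1.monotone (Nat.lt_succ_iff.mp h)
    linarith
  simp [cost, hidx]

lemma cost_cases (hX : IsBiddingStrategy X) (u : ℝ) :
    u ≤ X 0 ∨ ∃ i, X i < u ∧ u ≤ X (i + 1) := by
  have hmem := costIdx_mem hX u
  cases h0 : costIdx X u with
  | zero => left; rwa [h0] at hmem
  | succ n =>
    right
    refine ⟨n, ?_, by rwa [h0] at hmem⟩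
    have hlt : n < costIdx X u := by omega
    have := Nat.notMem_of_lt_sInf (s := {i : ℕ | u ≤ X i}) hlt
    simpa using not_le.mp this

/-- The real-valued core characterization. -/
lemma key (hX : IsBiddingStrategy X) (h1 : 1 ≤ X 0) (r : ℝ) :
    (∀ u : ℝ, 1 ≤ u → cost X u / u ≤ r) ↔
      (X 0 ≤ r ∧ ∀ i, (∑ j ∈ Finset.range (i + 2), X j) ≤ r * X i) := by
  have hpos := hX.2.1
  constructor
  · intro h
    have hX0 : X 0 ≤ r := by
      have := h 1 le_rfl
      rwa [cost_of_le h1, div_one] at this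
    have hr : (1 : ℝ) ≤ r := le_trans h1 hX0
    have hr0 : (0 : ℝ) < r := by linarith
    refine ⟨hX0, fun i => ?_⟩
    set S := ∑ j ∈ Finset.range (i + 2), X j with hS
    by_contra hc
    push_neg at hc
    have hXi : X i < S / r := (lt_div_iff₀ hr0).mpr (by linarith)
    set u := min (X (i + 1)) ((X i + S / r) / 2) with hu
    have hXiu : X i < u := by
      have h2 : X i < (X i + S / r) / 2 := by linarith
      exact lt_min (hX.1 (Nat.lt_succ_self i)) h2
    have huX : u ≤ X (i + 1) := min_le_left _ _
    have hu1 : (1 : ℝ) ≤ u := by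
      have : X 0 ≤ X i := hX.1.monotone (Nat.zero_le i)
      linarith
    have hcost : cost X u = S := cost_of_lt hX hXiu huX
    have hle := h u hu1
    rw [hcost] at hle
    have hu0 : (0 : ℝ) < u := by linarith
    have hSu : S ≤ r * u := by
      have := (div_le_iff₀ hu0).mp hle
      linarith [this]
    have huS : u < S / r := lt_of_le_of_lt (min_le_right _ _) (by linarith)
    have : r * u < S := by
      have := (lt_div_iff₀ hr0).mp huS
      linarith
    linarith
  · rintro ⟨hX0, hsum⟩ u hu
    rcases cost_cases hX u with h | ⟨i, hlt, hle⟩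
    · rw [cost_of_le h]
      have h0 : (0 : ℝ) ≤ X 0 := le_of_lt (hpos 0)
      calc X 0 / u ≤ X 0 / 1 := div_le_div_of_nonneg_left h0 one_pos hu
        _ = X 0 := div_one _
        _ ≤ r := hX0
    · rw [cost_of_lt hX hlt hle]
      set S := ∑ j ∈ Finset.range (i + 2), X j with hS
      have hS0 : 0 ≤ S := Finset.sum_nonneg fun j _ => (hpos j).le
      have hXi0 : 0 < X i := hpos i
      have hu0 : 0 < u := lt_trans hXi0 hlt
      calc S / u ≤ S / X i := div_le_div_of_nonneg_left hS0 hXi0 hlt.le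
        _ ≤ r := (div_le_iff₀ hXi0).mpr (hsum i)

end BidAux

theorem stmt0 (X : ℕ → ℝ) (hX : IsBiddingStrategy X) (h1 : 1 ≤ X 0) :
    (⨆ u : {u : ℝ // 1 ≤ u}, ENNReal.ofReal (cost X u.1 / u.1)) =
      max (ENNReal.ofReal (X 0))
        (⨆ i : ℕ, ENNReal.ofReal ((∑ j ∈ Finset.range (i + 2), X j) / X i)) ∧
    (∀ r : ℝ, 1 ≤ r →
      ((∀ u : ℝ, 1 ≤ u → cost X u / u ≤ r) ↔
        (X 0 ≤ r ∧ ∀ i : ℕ, X (i + 1) ≤ r * X i - ∑ j ∈ Finset.range (i + 1), X j))) := by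
  have hpos := hX.2.1
  constructor
  · refine eq_of_forall_ge_iff fun c => ?_
    rcases eq_or_ne c ⊤ with rfl | hc
    · simp
    rw [iSup_le_iff, max_le_iff, iSup_le_iff]
    simp only [ENNReal.ofReal_le_iff_le_toReal hc]
    constructor
    · intro h
      have h' : ∀ u : ℝ, 1 ≤ u → cost X u / u ≤ c.toReal := fun u hu => h ⟨u, hu⟩
      obtain ⟨hX0, hsum⟩ := (BidAux.key hX h1 c.toReal).mp h'
      refine ⟨hX0, fun i => (div_le_iff₀ (hpos i)).mpr (hsum i)⟩
    · rintro ⟨hX0, hsum⟩ ⟨u, hu⟩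
      exact (BidAux.key hX h1 c.toReal).mpr
        ⟨hX0, fun i => (div_le_iff₀ (hpos i)).mp (hsum i)⟩ u hu
  · intro r _
    rw [BidAux.key hX h1 r]
    refine and_congr Iff.rfl (forall_congr' fun i => ?_)
    rw [Finset.sum_range_succ]
    constructor <;> intro h <;> linarith
end

section
/- Let r ≥ 4. A partial strategy Y = (y_i)_{i=0}^{l} is r-extendable if and only if it is tightly r-extendable. -/
/-- A bidding strategy is `r`-robust if `x 0 ≤ r` and
`x (i+1) ≤ r * x i - ∑_{j ≤ i} x j` for all `i`. -/
def IsRobust (r : ℝ) (X : ℕ → ℝ) : Prop :=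
  X 0 ≤ r ∧ ∀ i, X (i + 1) ≤ r * X i - ∑ j ∈ Finset.range (i + 1), X j

/-- A partial strategy with bids `Y 0, …, Y l`: positive and strictly increasing. -/
def IsPartialStrategy (Y : ℕ → ℝ) (l : ℕ) : Prop :=
  (∀ i, i ≤ l → 0 < Y i) ∧ ∀ i, i < l → Y i < Y (i + 1)

/-- The concatenation `(Y 0, …, Y l, Z 0, Z 1, …)`. -/
def concat (Y : ℕ → ℝ) (l : ℕ) (Z : ℕ → ℝ) : ℕ → ℝ :=
  fun i => if i ≤ l then Y i else Z (i - (l + 1))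

/-- `Y` (with bids indexed `0, …, l`) is `r`-extendable if it can be completed
to an `r`-robust bidding strategy. -/
def IsRExtendable (r : ℝ) (Y : ℕ → ℝ) (l : ℕ) : Prop :=
  ∃ Z : ℕ → ℝ, IsBiddingStrategy (concat Y l Z) ∧ IsRobust r (concat Y l Z)

/-- Auxiliary recursion computing the pair `(z n, ∑_{j ≤ n} z j)` of the tight
`r`-extension, where `A = ∑_{j=0}^{l} y j` and `yl = y l` (so `z (-1) = yl`). -/
noncomputable def tightAux (r A yl : ℝ) : ℕ → ℝ × ℝ
  | 0 => (r * yl - A, r * yl - A)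
  | n + 1 =>
      let p := tightAux r A yl n
      let z := r * p.1 - p.2 - A
      (z, p.2 + z)

/-- The tight `r`-extension of the partial strategy `Y` (indexed `0, …, l`):
`z i = r * z (i-1) - ∑_{j < i} z j - ∑_{j=0}^{l} Y j`, with `z (-1) = Y l`. -/
noncomputable def tightExt (r : ℝ) (Y : ℕ → ℝ) (l : ℕ) (n : ℕ) : ℝ :=
  (tightAux r (∑ j ∈ Finset.range (l + 1), Y j) (Y l) n).1

/-- `Y` is tightly `r`-extendable if its concatenation with its tight `r`-extension
is an `r`-robust bidding strategy. -/
def IsTightlyRExtendable (r : ℝ) (Y : ℕ → ℝ) (l : ℕ) : Prop :=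
  IsBiddingStrategy (concat Y l (tightExt r Y l)) ∧ IsRobust r (concat Y l (tightExt r Y l))

lemma tightAux_snd (r A yl : ℝ) : ∀ n, (tightAux r A yl n).2 = ∑ j ∈ Finset.range (n + 1), (tightAux r A yl j).1
  | 0 => by simp [tightAux]
  | n + 1 => by
      rw [Finset.sum_range_succ, ← tightAux_snd r A yl n]
      rfl

lemma tightExt_zero (r : ℝ) (Y : ℕ → ℝ) (l : ℕ) :
    tightExt r Y l 0 = r * Y l - ∑ j ∈ Finset.range (l + 1), Y j := rfl

lemma tightExt_succ (r : ℝ) (Y : ℕ → ℝ) (l n : ℕ) :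
    tightExt r Y l (n + 1) = r * tightExt r Y l n
      - ∑ j ∈ Finset.range (n + 1), tightExt r Y l j - ∑ j ∈ Finset.range (l + 1), Y j := by
  unfold tightExt
  rw [← tightAux_snd]
  rfl

lemma concat_of_le (Y Z : ℕ → ℝ) {i l : ℕ} (h : i ≤ l) : concat Y l Z i = Y i := if_pos h

lemma concat_add (Y Z : ℕ → ℝ) (l k : ℕ) : concat Y l Z (l + 1 + k) = Z k := by
  unfold concat
  rw [if_neg (by omega)]
  congr 1
  omega

lemma sum_concat (Y Z : ℕ → ℝ) (l : ℕ) : ∀ k, ∑ j ∈ Finset.range (l + 1 + k), concat Y l Z j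
    = (∑ j ∈ Finset.range (l + 1), Y j) + ∑ j ∈ Finset.range k, Z j
  | 0 => by
      simp only [Nat.add_zero, Finset.range_zero, Finset.sum_empty, add_zero]
      exact Finset.sum_congr rfl fun j hj => concat_of_le Y Z (by
        simp only [Finset.mem_range] at hj; omega)
  | k + 1 => by
      rw [show l + 1 + (k + 1) = (l + 1 + k) + 1 from rfl, Finset.sum_range_succ,
        sum_concat Y Z l k, concat_add, Finset.sum_range_succ Z k]
      ring


theorem stmt1 (r : ℝ) (hr : 4 ≤ r) (Y : ℕ → ℝ) (l : ℕ) (hY : IsPartialStrategy Y l) :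
    IsRExtendable r Y l ↔ IsTightlyRExtendable r Y l := by
  constructor
  · rintro ⟨Z, hbid, hrob⟩
    set A : ℝ := ∑ j ∈ Finset.range (l + 1), Y j with hAdef
    set T : ℕ → ℝ := tightExt r Y l with hTdef
    have hT0 : T 0 = r * Y l - A := tightExt_zero r Y l
    have hTs : ∀ n, T (n + 1) = r * T n - ∑ j ∈ Finset.range (n + 1), T j - A :=
      fun n => tightExt_succ r Y l n
    -- robustness facts about Z
    have hZ0 : Z 0 ≤ r * Y l - A := by
      have h := hrob.2 l
      rwa [show l + 1 = l + 1 + 0 from rfl, concat_add, concat_of_le Y Z le_rfl,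
        sum_concat Y Z l 0, Finset.range_zero, Finset.sum_empty, add_zero] at h
    have hZs : ∀ n, Z (n + 1) ≤ r * Z n - (A + ∑ j ∈ Finset.range (n + 1), Z j) := by
      intro n
      have h := hrob.2 (l + 1 + n)
      rwa [show l + 1 + n + 1 = l + 1 + (n + 1) from rfl, concat_add, concat_add,
        sum_concat Y Z l (n + 1)] at h
    -- key comparison: T dominates Z, with control on partial sums
    have key : ∀ n, 0 ≤ T n - Z n ∧
        ∑ j ∈ Finset.range (n + 1), (T j - Z j) ≤ r / 2 * (T n - Z n) := by
      intro n
      induction n with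
      | zero =>
          have h0 : 0 ≤ T 0 - Z 0 := by rw [hT0]; linarith
          refine ⟨h0, ?_⟩
          rw [Finset.sum_range_one]
          nlinarith
      | succ n ih =>
          obtain ⟨h1, h2⟩ := ih
          have hrec : r * (T n - Z n) - ∑ j ∈ Finset.range (n + 1), (T j - Z j)
              ≤ T (n + 1) - Z (n + 1) := by
            have hz := hZs n
            have ht := hTs n
            rw [Finset.sum_sub_distrib]
            linarith
          have hd1 : 0 ≤ T (n + 1) - Z (n + 1) := by nlinarith
          refine ⟨hd1, ?_⟩
          rw [Finset.sum_range_succ]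
          nlinarith
    have hdmono : ∀ n, T n - Z n ≤ T (n + 1) - Z (n + 1) := by
      intro n
      obtain ⟨h1, h2⟩ := key n
      have hz := hZs n
      have ht := hTs n
      have hrec : r * (T n - Z n) - ∑ j ∈ Finset.range (n + 1), (T j - Z j)
          ≤ T (n + 1) - Z (n + 1) := by
        rw [Finset.sum_sub_distrib]; linarith
      nlinarith
    -- Z's pieces
    have hZpos : ∀ k, 0 < Z k := by
      intro k
      have := hbid.2.1 (l + 1 + k)
      rwa [concat_add] at this
    have hZmono : ∀ k, Z k < Z (k + 1) := by
      intro k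
      have := hbid.1 (show l + 1 + k < l + 1 + (k + 1) by omega)
      rwa [concat_add, concat_add] at this
    refine ⟨⟨?_, ?_, ?_⟩, ?_, ?_⟩
    · -- strict mono
      apply strictMono_nat_of_lt_succ
      intro i
      rcases lt_trichotomy i l with hi | hi | hi
      · rw [concat_of_le Y T (by omega), concat_of_le Y T (by omega)]
        exact hY.2 i hi
      · subst hi
        rw [concat_of_le Y T le_rfl, show i + 1 = i + 1 + 0 from rfl, concat_add]
        have hyl : Y i < Z 0 := by
          have := hbid.1 (show i < i + 1 by omega)
          rwa [concat_of_le Y Z le_rfl, show i + 1 = i + 1 + 0 from rfl, concat_add] at this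
        have := (key 0).1
        linarith
      · obtain ⟨k, rfl⟩ : ∃ k, i = l + 1 + k := ⟨i - (l + 1), by omega⟩
        rw [show l + 1 + k + 1 = l + 1 + (k + 1) from rfl, concat_add, concat_add]
        have := hdmono k
        have := hZmono k
        linarith
    · -- positivity
      intro i
      rcases le_or_gt i l with hi | hi
      · rw [concat_of_le Y T hi]; exact hY.1 i hi
      · obtain ⟨k, rfl⟩ : ∃ k, i = l + 1 + k := ⟨i - (l + 1), by omega⟩
        rw [concat_add]
        have := (key k).1
        have := hZpos k
        linarith
    · -- tendsto
      apply Filter.tendsto_atTop_mono _ hbid.2.2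
      intro i
      rcases le_or_gt i l with hi | hi
      · rw [concat_of_le Y T hi, concat_of_le Y Z hi]
      · obtain ⟨k, rfl⟩ : ∃ k, i = l + 1 + k := ⟨i - (l + 1), by omega⟩
        rw [concat_add, concat_add]
        have := (key k).1
        linarith
    · -- first robustness clause
      rw [concat_of_le Y T (Nat.zero_le l)]
      have := hrob.1
      rwa [concat_of_le Y Z (Nat.zero_le l)] at this
    · -- robustness inequalities
      intro i
      rcases lt_trichotomy i l with hi | hi | hi
      · have hsum : ∑ j ∈ Finset.range (i + 1), concat Y l T j
            = ∑ j ∈ Finset.range (i + 1), concat Y l Z j := by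
          refine Finset.sum_congr rfl fun j hj => ?_
          simp only [Finset.mem_range] at hj
          rw [concat_of_le Y T (by omega), concat_of_le Y Z (by omega)]
        rw [concat_of_le Y T (by omega), concat_of_le Y T (by omega), hsum]
        have h := hrob.2 i
        rwa [concat_of_le Y Z (by omega), concat_of_le Y Z (by omega)] at h
      · subst hi
        rw [concat_of_le Y T le_rfl, show i + 1 = i + 1 + 0 from rfl, concat_add,
          sum_concat Y T i 0, Finset.range_zero, Finset.sum_empty, add_zero, ← hTdef, hT0]
      · obtain ⟨k, rfl⟩ : ∃ k, i = l + 1 + k := ⟨i - (l + 1), by omega⟩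
        rw [show l + 1 + k + 1 = l + 1 + (k + 1) from rfl, concat_add, concat_add,
          sum_concat Y T l (k + 1), ← hTdef, hTs k]
        linarith
  · rintro ⟨h1, h2⟩
    exact ⟨tightExt r Y l, h1, h2⟩
end

section
/- Let r ≥ 4. A partial strategy Y = (y_i)_{i=0}^{l} is r-extendable if and only if Y is partially r-robust and (Σ_{i=0}^{l} y_i)/y_l ≤ (r + √(r(r−4)))/2. -/
/-- The partial strategy `Y` (indexed `0, …, l`) is partially `r`-robust. -/
def IsPartiallyRobust (r : ℝ) (Y : ℕ → ℝ) (l : ℕ) : Prop :=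
  Y 0 ≤ r ∧ ∀ i, i < l → Y (i + 1) ≤ r * Y i - ∑ j ∈ Finset.range (i + 1), Y j

/-- Greedy extension: state `(current bid, current total sum)`. -/
noncomputable def auxSeq (r y S : ℝ) : ℕ → ℝ × ℝ
  | 0 => (y, S)
  | k+1 => (r * (auxSeq r y S k).1 - (auxSeq r y S k).2, r * (auxSeq r y S k).1)

set_option maxHeartbeats 1000000 in
theorem stmt2 (r : ℝ) (hr : 4 ≤ r) (Y : ℕ → ℝ) (l : ℕ) (hY : IsPartialStrategy Y l) :
    IsRExtendable r Y l ↔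
      (IsPartiallyRobust r Y l ∧
        (∑ i ∈ Finset.range (l + 1), Y i) / Y l ≤ (r + Real.sqrt (r * (r - 4))) / 2) := by
  obtain ⟨hYpos, hYmono⟩ := hY
  have hy : 0 < Y l := hYpos l le_rfl
  have hrr : 0 ≤ r * (r - 4) := by nlinarith
  set q := Real.sqrt (r * (r - 4)) with hqdef
  have hq0 : 0 ≤ q := Real.sqrt_nonneg _
  have hq2 : q ^ 2 = r * (r - 4) := Real.sq_sqrt hrr
  have hqlt : q < r - 2 := (Real.sqrt_lt' (by linarith)).2 (by nlinarith)
  set φ := (r + q) / 2 with hφdef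
  set ψ := (r - q) / 2 with hψdef
  have hsum : φ + ψ = r := by rw [hφdef, hψdef]; ring
  have hprod : φ * ψ = r := by rw [hφdef, hψdef]; nlinarith [hq2]
  have hψ1 : 1 < ψ := by rw [hψdef]; linarith
  have hφ2 : 2 ≤ φ := by rw [hφdef]; linarith
  have hψφ : ψ ≤ φ := by rw [hφdef, hψdef]; linarith
  have hφr : φ < r - 1 := by linarith
  constructor
  · rintro ⟨Z, ⟨hmono, hpos, _htend⟩, hX0, hrob⟩
    set X := concat Y l Z with hXdef
    have hXY : ∀ i, i ≤ l → X i = Y i := fun i hi => if_pos hi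
    have hsumY : ∀ i, i ≤ l → ∑ j ∈ Finset.range (i + 1), X j
        = ∑ j ∈ Finset.range (i + 1), Y j := by
      intro i hi
      refine Finset.sum_congr rfl fun j hj => hXY j ?_
      exact le_trans (Nat.lt_succ_iff.mp (Finset.mem_range.mp hj)) hi
    have hpartial : IsPartiallyRobust r Y l := by
      refine ⟨by rw [← hXY 0 (Nat.zero_le l)]; exact hX0, fun i hi => ?_⟩
      have h := hrob i
      rwa [hXY (i + 1) hi, hXY i hi.le, hsumY i hi.le] at h
    refine ⟨hpartial, ?_⟩
    by_contra hcon
    push_neg at hcon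
    set T := ∑ i ∈ Finset.range (l + 1), Y i with hTdef
    set σ := T / Y l with hσdef
    have hσφ : φ < σ := hcon
    set ε := σ - φ with hεdef
    have hε : 0 < ε := by linarith
    set δ := ε ^ 2 / r with hδdef
    have hδ : 0 < δ := by positivity
    -- Claim A : partial sums are < (r-1) * current bid
    have hA : ∀ i, (∑ j ∈ Finset.range (i + 1), X j) < (r - 1) * X i := by
      intro i
      have h1 := hrob i
      have h2 := hmono (Nat.lt_succ_self i)
      linarith
    -- Claim B : ratio grows by at least δ each step past φ
    have hB : ∀ k, (σ + k * δ) * X (l + k) ≤ ∑ j ∈ Finset.range (l + k + 1), X j := by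
      intro k
      induction k with
      | zero =>
        have hXl : X l = Y l := hXY l le_rfl
        have : σ * Y l = T := div_mul_cancel₀ T hy.ne'
        simp only [Nat.add_zero, Nat.cast_zero, zero_mul, add_zero]
        rw [hsumY l le_rfl, hXl, this]
      | succ k ih =>
        set s := σ + (k : ℝ) * δ with hsdef
        set x := X (l + k) with hxdef
        set x' := X (l + k + 1) with hx'def
        set S := ∑ j ∈ Finset.range (l + k + 1), X j with hSdef
        have hx : 0 < x := hpos _
        have hx' : 0 < x' := hpos _
        have hrobk : x' ≤ r * x - S := hrob (l + k)
        have hAk : S < (r - 1) * x := hA (l + k)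
        have hsφ : φ < s := by
          have : (0:ℝ) ≤ (k:ℝ) * δ := by positivity
          linarith
        have hsr : s < r - 1 := by nlinarith only [ih, hAk, hx]
        have hεs : ε ≤ s - φ := by
          have : (0:ℝ) ≤ (k : ℝ) * δ := by positivity
          rw [hεdef, hsdef]; linarith
        have hδr : δ * r = ε ^ 2 := by rw [hδdef]; field_simp
        have hid : (s - φ) * (s - ψ) = s ^ 2 - r * s + r := by
          linear_combination (-s) * hsum + hprod
        -- key : (s + δ - 1) * (r - s) ≤ s
        have hkey : (s + δ - 1) * (r - s) ≤ s := by
          have h4 : ε ≤ s - ψ := by linarith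
          have h5 : ε * ε ≤ (s - φ) * (s - ψ) :=
            mul_le_mul hεs h4 hε.le (by linarith)
          have hδrs : δ * (r - s) ≤ δ * r :=
            mul_le_mul_of_nonneg_left (by linarith) hδ.le
          linarith only [h5, hδrs, hδr, hid]
        have hgoal : ∑ j ∈ Finset.range (l + (k + 1) + 1), X j
            = S + x' := by
          have : l + (k + 1) + 1 = (l + k + 1) + 1 := by omega
          rw [this, Finset.sum_range_succ]
        have hcast : σ + ((k + 1 : ℕ) : ℝ) * δ = s + δ := by
          rw [hsdef]; push_cast; ring
        rw [hgoal, hcast]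
        have hxb : x' ≤ (r - s) * x := by linarith only [hrobk, ih]
        have h6 : (s + δ - 1) * x' ≤ (s + δ - 1) * ((r - s) * x) :=
          mul_le_mul_of_nonneg_left hxb (by linarith)
        have h7 : (s + δ - 1) * ((r - s) * x) ≤ s * x := by
          have h := mul_le_mul_of_nonneg_right hkey hx.le
          linarith only [h]
        have hxx : X (l + (k + 1)) = x' := rfl
        rw [hxx]
        linarith only [h6, h7, ih]
    obtain ⟨k, hk⟩ := exists_nat_gt ((r - 1 - σ) / δ)
    have hk' : r - 1 < σ + k * δ := by
      rw [div_lt_iff₀ hδ] at hk; linarith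
    have h1 := hB k
    have h2 := hA (l + k)
    have h3 := hpos (l + k)
    nlinarith only [h1, h2, h3, hk']
  · rintro ⟨⟨hY0, hYrob⟩, hratio⟩
    set T := ∑ i ∈ Finset.range (l + 1), Y i with hTdef
    have hT : T ≤ φ * Y l := by
      rw [div_le_iff₀ hy] at hratio; linarith
    set A := auxSeq r (Y l) T with hAdef
    have hA0 : A 0 = (Y l, T) := rfl
    have hAstep : ∀ k, A (k + 1) = (r * (A k).1 - (A k).2, r * (A k).1) := fun k => rfl
    have hψ0 : (0:ℝ) < ψ := by linarith
    have hφ0 : (0:ℝ) < φ := by linarith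
    have hφquad : φ * r - φ * φ = r := by linear_combination (-φ) * hsum + hprod
    -- invariant
    have hInv : ∀ k, 0 < (A k).1 ∧ (A k).2 ≤ φ * (A k).1 ∧ ψ * (A k).1 ≤ (A (k + 1)).1 := by
      intro k
      induction k with
      | zero =>
        refine ⟨hy, by rw [hA0]; exact hT, ?_⟩
        rw [hA0, hAstep 0, hA0]
        simp only
        have hx1 : (φ + ψ) * Y l = r * Y l := by rw [hsum]
        linarith only [hT, hx1]
      | succ k ih =>
        obtain ⟨hx, hS, hgrow⟩ := ih
        have hx' : 0 < (A (k + 1)).1 := lt_of_lt_of_le (mul_pos hψ0 hx) hgrow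
        have hS' : (A (k + 1)).2 ≤ φ * (A (k + 1)).1 := by
          rw [hAstep k]
          simp only
          have h1 : φ * (A k).2 ≤ φ * (φ * (A k).1) := mul_le_mul_of_nonneg_left hS hφ0.le
          have h2 : (φ * r - φ * φ) * (A k).1 = r * (A k).1 := by rw [hφquad]
          linarith only [h1, h2]
        refine ⟨hx', hS', ?_⟩
        rw [hAstep (k + 1)]
        simp only
        have h3 : (φ + ψ) * (A (k + 1)).1 = r * (A (k + 1)).1 := by rw [hsum]
        linarith only [hS', h3]
    set Z : ℕ → ℝ := fun k => (A (k + 1)).1 with hZdef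
    set X := concat Y l Z with hXdef
    have hXY : ∀ i, i ≤ l → X i = Y i := fun i hi => if_pos hi
    have hC : ∀ k, X (l + k) = (A k).1 := by
      intro k
      cases k with
      | zero => rw [Nat.add_zero, hXY l le_rfl, hA0]
      | succ k =>
        have h1 : ¬ (l + (k + 1) ≤ l) := by omega
        have h2 : l + (k + 1) - (l + 1) = k := by omega
        show (if l + (k + 1) ≤ l then Y (l + (k + 1)) else Z (l + (k + 1) - (l + 1))) = _
        rw [if_neg h1, h2]
    -- strict monotonicity
    have hmono : StrictMono X := by
      apply strictMono_nat_of_lt_succ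
      intro n
      rcases lt_or_ge n l with hn | hn
      · rw [hXY n hn.le, hXY (n + 1) hn]
        exact hYmono n hn
      · obtain ⟨k, rfl⟩ := Nat.exists_eq_add_of_le hn
        have e1 : l + k + 1 = l + (k + 1) := by omega
        rw [hC k, e1, hC (k + 1)]
        obtain ⟨hx, _, hgrow⟩ := hInv k
        have : (A k).1 < ψ * (A k).1 := by nlinarith only [hx, hψ1]
        linarith only [this, hgrow]
    -- positivity
    have hposX : ∀ i, 0 < X i := by
      intro i
      rcases le_or_gt i l with hi | hi
      · rw [hXY i hi]; exact hYpos i hi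
      · obtain ⟨k, rfl⟩ := Nat.exists_eq_add_of_le hi.le
        rw [hC k]; exact (hInv k).1
    -- sums
    have hsumY : ∀ i, i ≤ l → ∑ j ∈ Finset.range (i + 1), X j
        = ∑ j ∈ Finset.range (i + 1), Y j := by
      intro i hi
      refine Finset.sum_congr rfl fun j hj => hXY j ?_
      exact le_trans (Nat.lt_succ_iff.mp (Finset.mem_range.mp hj)) hi
    have hSum : ∀ k, ∑ j ∈ Finset.range (l + k + 1), X j = (A k).2 := by
      intro k
      induction k with
      | zero => rw [Nat.add_zero, hsumY l le_rfl, hA0]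
      | succ k ih =>
        have e1 : l + (k + 1) + 1 = (l + k + 1) + 1 := by omega
        have e2 : l + k + 1 = l + (k + 1) := by omega
        rw [e1, Finset.sum_range_succ, ih, e2, hC (k + 1), hAstep k]
        simp only
        ring
    -- tendsto
    have hgeom : ∀ k, ψ ^ k * Y l ≤ (A k).1 := by
      intro k
      induction k with
      | zero => simp [hA0]
      | succ k ih =>
        have h := (hInv k).2.2
        calc ψ ^ (k + 1) * Y l = ψ * (ψ ^ k * Y l) := by ring
          _ ≤ ψ * (A k).1 := mul_le_mul_of_nonneg_left ih hψ0.le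
          _ ≤ (A (k + 1)).1 := h
    have htend : Filter.Tendsto X Filter.atTop Filter.atTop := by
      rw [Filter.tendsto_atTop]
      intro b
      have hT2 : Filter.Tendsto (fun k : ℕ => ψ ^ k * Y l) Filter.atTop Filter.atTop :=
        (tendsto_pow_atTop_atTop_of_one_lt hψ1).atTop_mul_const hy
      obtain ⟨k, hk⟩ := (hT2.eventually_ge_atTop b).exists
      filter_upwards [Filter.eventually_ge_atTop (l + k)] with n hn
      calc b ≤ ψ ^ k * Y l := hk
        _ ≤ (A k).1 := hgeom k
        _ = X (l + k) := (hC k).symm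
        _ ≤ X n := hmono.monotone hn
    refine ⟨Z, ⟨hmono, hposX, htend⟩, ?_, ?_⟩
    · show X 0 ≤ r
      rw [hXY 0 (Nat.zero_le l)]; exact hY0
    · intro i
      show X (i + 1) ≤ r * X i - ∑ j ∈ Finset.range (i + 1), X j
      rcases lt_or_ge i l with hi | hi
      · rw [hXY (i + 1) hi, hXY i hi.le, hsumY i hi.le]
        exact hYrob i hi
      · obtain ⟨k, rfl⟩ := Nat.exists_eq_add_of_le hi
        have e1 : l + k + 1 = l + (k + 1) := by omega
        rw [hSum k, hC k, e1, hC (k + 1), hAstep k]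
end

section
/- Let r ≥ 4 and let μ be a finitely supported probability distribution on [1,∞). Then the infimum of cons(X,μ) over all r-robust bidding strategies X is attained; that is, there exists an r-robust bidding strategy X* such that cons(X*,μ) ≤ cons(Y,μ) for every r-robust bidding strategy Y. -/
/-- The consistency of `X` with respect to a finitely supported prediction given
by points `μp i` with probabilities `p i`. -/
noncomputable def consFin (k : ℕ) (p μp : Fin k → ℝ) (X : ℕ → ℝ) : ℝ :=
  (∑ i, p i * cost X (μp i)) / (∑ i, p i * μp i)


open Filter Finset

section helpers

lemma exists_idx_le {X : ℕ → ℝ} (hX : Filter.Tendsto X Filter.atTop Filter.atTop) (u : ℝ) :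
    ∃ i, u ≤ X i := (hX.eventually_ge_atTop u).exists

lemma costIdx_mem {X : ℕ → ℝ} {u : ℝ} (h : ∃ i, u ≤ X i) : u ≤ X (costIdx X u) :=
  Nat.sInf_mem h

lemma costIdx_le {X : ℕ → ℝ} {u : ℝ} {j : ℕ} (h : u ≤ X j) : costIdx X u ≤ j :=
  Nat.sInf_le h

lemma lt_of_lt_costIdx {X : ℕ → ℝ} {u : ℝ} {j : ℕ} (h : j < costIdx X u) : X j < u := by
  have := Nat.notMem_of_lt_sInf (s := {i : ℕ | u ≤ X i}) h
  simpa [Set.mem_setOf_eq, not_le] using this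

lemma cost_nonneg {X : ℕ → ℝ} (hpos : ∀ i, 0 < X i) (u : ℝ) : 0 ≤ cost X u :=
  Finset.sum_nonneg fun j _ => (hpos j).le

/-- Lemma A : partial sums of a robust strategy are at most `α` times the last bid. -/
lemma sum_le_alpha {r α : ℝ} (hα1 : 1 ≤ α) (hαhalf : r / 2 ≤ α)
    (heq : α * α - r * α + r = 0)
    {X : ℕ → ℝ} (hpos : ∀ i, 0 < X i)
    (hrob : ∀ i, X (i + 1) ≤ r * X i - ∑ j ∈ Finset.range (i + 1), X j) :
    ∀ n, ∑ j ∈ Finset.range (n + 1), X j ≤ α * X n := by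
  by_contra h
  push_neg at h
  obtain ⟨n, hn⟩ := h
  have hα0 : (0:ℝ) < α := lt_of_lt_of_le one_pos hα1
  set S : ℕ → ℝ := fun i => ∑ j ∈ Finset.range (i + 1), X j with hSdef
  set ψ : ℕ → ℝ := fun i => S i - α * X i with hψdef
  have hψn : 0 < ψ n := by simp only [hψdef]; linarith
  have hstep : ∀ i, α * ψ i ≤ ψ (i + 1) := by
    intro i
    have h1 : X (i + 1) ≤ r * X i - S i := hrob i
    have h2 : ψ (i + 1) = S i - (α - 1) * X (i + 1) := by
      simp only [hψdef, hSdef, Finset.sum_range_succ]; ring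
    have h3 : (α - 1) * X (i + 1) ≤ (α - 1) * (r * X i - S i) :=
      mul_le_mul_of_nonneg_left h1 (by linarith)
    have h4 : ψ (i+1) ≥ S i - (α - 1) * (r * X i - S i) := by rw [h2]; linarith
    have h5 : S i - (α - 1) * (r * X i - S i) = α * S i - (α*α) * X i + (α*α - r*α + r) * X i := by
      ring
    rw [heq] at h5
    have : α * ψ i = α * S i - (α*α) * X i := by simp only [hψdef]; ring
    linarith
  have hgrow : ∀ i, X (i + 1) ≤ (r - α) * X i - ψ i := by
    intro i
    have := hrob i
    simp only [hψdef]
    have : X (i+1) ≤ r * X i - S i := hrob i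
    linarith
  have hψpos : ∀ m, 0 < ψ (n + m) := by
    intro m
    induction m with
    | zero => simpa using hψn
    | succ m ih =>
      have := hstep (n + m)
      have : 0 < α * ψ (n + m) := mul_pos hα0 ih
      have h2 := hstep (n + m)
      have heqi : (n + (m+1)) = (n + m) + 1 := rfl
      rw [heqi]
      nlinarith [hstep (n+m)]
  have hq : ∀ m, X (n + m) / ψ (n + m) ≤ X n / ψ n - m * (1 / α) := by
    intro m
    induction m with
    | zero => simp
    | succ m ih =>
      set i := n + m with hi
      have hpsi : 0 < ψ i := hψpos m
      have hpsi' : 0 < ψ (i + 1) := hψpos (m + 1)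
      have hle : α * ψ i ≤ ψ (i + 1) := hstep i
      have h1 : X (i+1) / ψ (i+1) ≤ X (i+1) / (α * ψ i) :=
        div_le_div_of_nonneg_left (hpos (i+1)).le (mul_pos hα0 hpsi) hle
      have h2 : X (i+1) / (α * ψ i) ≤ ((r - α) * X i - ψ i) / (α * ψ i) :=
        (div_le_div_iff_of_pos_right (mul_pos hα0 hpsi)).mpr (hgrow i)
      have h3 : ((r - α) * X i - ψ i) / (α * ψ i) = (r - α)/α * (X i / ψ i) - 1/α := by
        field_simp
      have h4 : (r - α)/α * (X i / ψ i) ≤ X i / ψ i := by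
        have hx : 0 ≤ X i / ψ i := div_nonneg (hpos i).le hpsi.le
        have : (r - α)/α ≤ 1 := by
          rw [div_le_one hα0]; linarith
        nlinarith
      have : X (i+1) / ψ (i+1) ≤ X i / ψ i - 1/α := by
        rw [h3] at h2; linarith
      have hfin : X (n + (m+1)) / ψ (n + (m+1)) ≤ X i / ψ i - 1/α := this
      have : (↑(m+1) : ℝ) * (1/α) = m * (1/α) + 1/α := by push_cast; ring
      rw [this]
      linarith
  obtain ⟨m, hm⟩ := exists_nat_gt (α * (X n / ψ n))
  have h1 := hq m
  have h2 : X n / ψ n < m * (1/α) := by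
    have : α * (X n / ψ n) * (1/α) < m * (1/α) := by
      apply mul_lt_mul_of_pos_right hm
      positivity
    calc X n / ψ n = α * (X n / ψ n) * (1/α) := by field_simp
    _ < m * (1/α) := this
  have h3 : 0 < X (n + m) / ψ (n + m) := div_pos (hpos _) (hψpos m)
  linarith

end helpers

section shift

lemma shiftLemma {r : ℝ} (hr0 : 0 ≤ r) {Y : ℕ → ℝ} (hY : IsBiddingStrategy Y)
    (hrob : IsRobust r Y) :
    ∃ W : ℕ → ℝ, IsBiddingStrategy W ∧ IsRobust r W ∧ 1 ≤ W 0 ∧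
      ∀ u, 1 ≤ u → cost W u ≤ cost Y u := by
  obtain ⟨hmono, hpos, htend⟩ := hY
  have hex : ∃ i, 1 ≤ Y i := exists_idx_le htend 1
  obtain ⟨t, ht1, htmin⟩ : ∃ t, 1 ≤ Y t ∧ ∀ j, j < t → Y j < 1 :=
    ⟨sInf {i : ℕ | 1 ≤ Y i}, Nat.sInf_mem hex, fun j hj => by
      simpa [Set.mem_setOf_eq, not_le] using
        Nat.notMem_of_lt_sInf (s := {i : ℕ | 1 ≤ Y i}) hj⟩
  refine ⟨fun i => Y (t + i), ⟨?_, fun i => hpos _, ?_⟩, ⟨?_, ?_⟩, ht1, ?_⟩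
  · exact fun a b hab => hmono (by omega)
  · exact htend.comp (tendsto_atTop_atTop_of_monotone (fun a b h => by omega)
      (fun b => ⟨b, by omega⟩))
  · -- W 0 ≤ r
    show Y (t + 0) ≤ r
    rcases Nat.eq_zero_or_eq_succ_pred t with h0 | hs
    · rw [h0]; simpa using hrob.1
    · set s := t - 1 with hsdef
      have h1 := hrob.2 s
      have h2 : (0:ℝ) ≤ ∑ j ∈ Finset.range (s+1), Y j :=
        Finset.sum_nonneg fun j _ => (hpos j).le
      have h3 : Y s < 1 := htmin s (by omega)
      have h4 : r * Y s ≤ r * 1 := mul_le_mul_of_nonneg_left h3.le hr0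
      have : Y (s + 1) ≤ r := by linarith
      rw [show t + 0 = t from rfl, hs]
      exact this
  · intro i
    have h1 := hrob.2 (t + i)
    have h2 : ∑ j ∈ Finset.range (t + (i+1)), Y j
        = ∑ j ∈ Finset.range t, Y j + ∑ j ∈ Finset.range (i+1), Y (t + j) :=
      Finset.sum_range_add Y t (i+1)
    have h3 : (0:ℝ) ≤ ∑ j ∈ Finset.range t, Y j :=
      Finset.sum_nonneg fun j _ => (hpos j).le
    show Y (t + (i + 1)) ≤ r * Y (t + i) - ∑ j ∈ Finset.range (i+1), Y (t + j)
    rw [show t + (i+1) = t + i + 1 from rfl]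
    rw [show t + (i+1) = t + i + 1 from rfl] at h2
    linarith
  · intro u hu
    have hWex : ∃ i, u ≤ Y (t + i) := by
      obtain ⟨i, hi⟩ := exists_idx_le htend u
      exact ⟨i, le_trans hi (hmono.monotone (by omega))⟩
    have hd : u ≤ Y (t + costIdx (fun i => Y (t + i)) u) :=
      costIdx_mem (X := fun i => Y (t + i)) hWex
    set d := costIdx (fun i => Y (t + i)) u with hddef
    have hYidx : costIdx Y u = t + d := by
      apply le_antisymm (costIdx_le hd)
      have he : u ≤ Y (costIdx Y u) := costIdx_mem ⟨t + d, hd⟩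
      have het : t ≤ costIdx Y u := by
        by_contra hlt
        push_neg at hlt
        have := htmin _ hlt
        linarith
      have hd2 : d ≤ costIdx Y u - t := by
        apply costIdx_le (X := fun i => Y (t + i))
        show u ≤ Y (t + (costIdx Y u - t))
        rw [Nat.add_sub_cancel' het]
        exact he
      omega
    show (cost (fun i => Y (t + i)) u) ≤ cost Y u
    unfold cost
    rw [hYidx, ← hddef]
    have h2 : ∑ j ∈ Finset.range (t + (d+1)), Y j
        = ∑ j ∈ Finset.range t, Y j + ∑ j ∈ Finset.range (d+1), Y (t + j) :=
      Finset.sum_range_add Y t (d+1)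
    have h3 : (0:ℝ) ≤ ∑ j ∈ Finset.range t, Y j :=
      Finset.sum_nonneg fun j _ => (hpos j).le
    rw [show t + d + 1 = t + (d+1) from rfl, h2]
    linarith

end shift

section extend

lemma extendLemma {r α : ℝ} (hα1 : 1 ≤ α) (heq : α * α - r * α + r = 0) (hαlt : α + 1 < r)
    (cnt : ℕ) (hcnt : 0 < cnt) (z : ℕ → ℝ)
    (h1 : ∀ j, j < cnt → 1 ≤ z j)
    (hmono : ∀ j, j + 1 < cnt → z j < z (j+1))
    (hz0 : z 0 ≤ r)
    (hrobz : ∀ j, j + 1 < cnt → z (j+1) ≤ r * z j - ∑ i ∈ Finset.range (j+1), z i)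
    (hsum : ∑ j ∈ Finset.range cnt, z j ≤ α * z (cnt-1)) :
    ∃ X : ℕ → ℝ, IsBiddingStrategy X ∧ IsRobust r X ∧ ∀ j, j < cnt → X j = z j := by
  have hα0 : (0:ℝ) < α := lt_of_lt_of_le one_pos hα1
  have hrα : 1 < r - α := by linarith
  set P : ℕ → ℝ × ℝ := fun m => Nat.rec (z (cnt-1), ∑ j ∈ Finset.range cnt, z j)
    (fun _ q => (r * q.1 - q.2, r * q.1)) m with hPdef
  have hP0 : P 0 = (z (cnt-1), ∑ j ∈ Finset.range cnt, z j) := rfl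
  have hPs : ∀ m, P (m+1) = (r * (P m).1 - (P m).2, r * (P m).1) := fun m => rfl
  have hinv : ∀ m, 1 ≤ (P m).1 ∧ (P m).2 ≤ α * (P m).1 := by
    intro m
    induction m with
    | zero => exact ⟨h1 (cnt-1) (by omega), by rw [hP0]; exact hsum⟩
    | succ m ih =>
      obtain ⟨hp1, hp2⟩ := ih
      rw [hPs m]
      constructor
      · simp only []
        nlinarith
      · simp only []
        nlinarith [mul_le_mul_of_nonneg_left hp2 hα0.le]
  have hgrow : ∀ m, (r - α) * (P m).1 ≤ (P (m+1)).1 := by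
    intro m
    obtain ⟨hp1, hp2⟩ := hinv m
    rw [hPs m]
    simp only []
    nlinarith
  have hPlt : ∀ m, (P m).1 < (P (m+1)).1 := by
    intro m
    obtain ⟨hp1, _⟩ := hinv m
    have := hgrow m
    nlinarith
  set X : ℕ → ℝ := fun i => if i < cnt then z i else (P (i + 1 - cnt)).1 with hXdef
  have hXpre : ∀ j, j < cnt → X j = z j := by
    intro j hj; simp only [hXdef, if_pos hj]
  have hXval' : ∀ i, cnt ≤ i + 1 → X i = (P (i + 1 - cnt)).1 := by
    intro i h
    by_cases hlt : i < cnt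
    · have hieq : i = cnt - 1 := by omega
      have h2 : i + 1 - cnt = 0 := by omega
      rw [hXpre i hlt, h2, hP0, hieq]
    · simp only [hXdef, if_neg hlt]
  have hsums : ∀ m, (P m).2 = ∑ j ∈ Finset.range (cnt + m), X j := by
    intro m
    induction m with
    | zero =>
      rw [hP0]
      simp only [Nat.add_zero]
      exact (Finset.sum_congr rfl fun j hj =>
        (hXpre j (Finset.mem_range.mp hj)).symm)
    | succ m ih =>
      have hX : X (cnt + m) = (P (m+1)).1 := by
        rw [hXval' (cnt + m) (by omega)]
        have he0 : cnt + m + 1 - cnt = m + 1 := by omega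
        rw [he0]
      have he : cnt + (m + 1) = (cnt + m) + 1 := rfl
      rw [he, Finset.sum_range_succ, ← ih, hX, hPs m]
      simp only []
      ring
  have hmonoX : StrictMono X := by
    apply strictMono_nat_of_lt_succ
    intro i
    by_cases h : i + 1 < cnt
    · rw [hXpre i (by omega), hXpre (i+1) h]
      exact hmono i h
    · rw [hXval' i (by omega), hXval' (i+1) (by omega)]
      have he : i + 1 + 1 - cnt = (i + 1 - cnt) + 1 := by omega
      rw [he]
      exact hPlt _
  have hposX : ∀ i, 0 < X i := by
    intro i
    by_cases h : i < cnt
    · rw [hXpre i h]; linarith [h1 i h]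
    · rw [hXval' i (by omega)]
      linarith [(hinv (i + 1 - cnt)).1]
  have hpow : ∀ m, (r - α)^m ≤ (P m).1 := by
    intro m
    induction m with
    | zero => simpa using (hinv 0).1
    | succ m ih =>
      calc (r-α)^(m+1) = (r-α) * (r-α)^m := by ring
      _ ≤ (r-α) * (P m).1 := by nlinarith
      _ ≤ (P (m+1)).1 := hgrow m
  have htendX : Filter.Tendsto X Filter.atTop Filter.atTop := by
    apply tendsto_atTop_atTop_of_monotone hmonoX.monotone
    intro b
    obtain ⟨m, hm⟩ := pow_unbounded_of_one_lt b hrα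
    refine ⟨cnt - 1 + m, ?_⟩
    rw [hXval' (cnt - 1 + m) (by omega)]
    have he : cnt - 1 + m + 1 - cnt = m := by omega
    rw [he]
    linarith [hpow m]
  refine ⟨X, ⟨hmonoX, hposX, htendX⟩, ⟨?_, ?_⟩, hXpre⟩
  · rw [hXpre 0 hcnt]; exact hz0
  · intro i
    by_cases h : i + 2 ≤ cnt
    · rw [hXpre (i+1) (by omega), hXpre i (by omega)]
      have hsumeq : ∑ j ∈ Finset.range (i+1), X j = ∑ j ∈ Finset.range (i+1), z j :=
        Finset.sum_congr rfl fun j hj => hXpre j (by have := Finset.mem_range.mp hj; omega)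
      rw [hsumeq]
      exact hrobz i (by omega)
    · rw [hXval' (i+1) (by omega), hXval' i (by omega)]
      have he : i + 1 + 1 - cnt = (i + 1 - cnt) + 1 := by omega
      rw [he, hPs]
      have hsum2 : (P (i + 1 - cnt)).2 = ∑ j ∈ Finset.range (i+1), X j := by
        have := hsums (i + 1 - cnt)
        have he2 : cnt + (i + 1 - cnt) = i + 1 := by omega
        rwa [he2] at this
      rw [← hsum2]

end extend

section more

lemma alphaFacts {r : ℝ} (hr : 4 ≤ r) :
    ∃ α : ℝ, 1 ≤ α ∧ r / 2 ≤ α ∧ α * α - r * α + r = 0 ∧ α + 1 < r := by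
  have h0 : (0:ℝ) ≤ r^2 - 4*r := by nlinarith
  set s := Real.sqrt (r^2 - 4*r) with hs
  have hs0 : 0 ≤ s := Real.sqrt_nonneg _
  have hs2 : s * s = r^2 - 4*r := Real.mul_self_sqrt h0
  have hslt : s < r - 2 := by
    rw [hs, Real.sqrt_lt' (by linarith)]
    nlinarith
  refine ⟨(r + s)/2, by linarith, by linarith, by nlinarith, by linarith⟩

lemma cost_eq_F {W : ℕ → ℝ} (hmono : StrictMono W) {u : ℝ} {N : ℕ} (hN : u ≤ W N) :
    cost W u = ∑ t ∈ Finset.range (N+1),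
      if t = 0 ∨ W (t-1) < u then W t else 0 := by
  classical
  have hex : ∃ i, u ≤ W i := ⟨N, hN⟩
  have hd : u ≤ W (costIdx W u) := costIdx_mem hex
  set d := costIdx W u with hdd
  have hdN : d ≤ N := costIdx_le hN
  have hcond : ∀ t, (t = 0 ∨ W (t-1) < u) ↔ t ≤ d := by
    intro t
    constructor
    · rintro (rfl | hlt)
      · exact Nat.zero_le d
      · by_contra hgt
        push_neg at hgt
        have h1 : d ≤ t - 1 := by omega
        have := hmono.monotone h1
        linarith
    · intro hle
      rcases Nat.eq_zero_or_pos t with rfl | ht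
      · exact Or.inl rfl
      · exact Or.inr (lt_of_lt_costIdx (show t - 1 < d by omega))
  have h2 : ∀ t ∈ Finset.range (N+1),
      (if t = 0 ∨ W (t-1) < u then W t else 0) = (if t ≤ d then W t else 0) := by
    intro t _
    by_cases hc : t ≤ d
    · rw [if_pos ((hcond t).mpr hc), if_pos hc]
    · rw [if_neg (fun hh => hc ((hcond t).mp hh)), if_neg hc]
  rw [Finset.sum_congr rfl h2, ← Finset.sum_filter]
  have hfe : (Finset.range (N+1)).filter (fun t => t ≤ d) = Finset.range (d+1) := by
    ext t
    simp only [Finset.mem_filter, Finset.mem_range]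
    omega
  rw [hfe]
  rfl

end more

set_option maxHeartbeats 1000000 in
theorem stmt3 (r : ℝ) (hr : 4 ≤ r) (k : ℕ) (hk : 0 < k)
    (p μp : Fin k → ℝ) (hp : ∀ i, 0 ≤ p i) (hps : ∑ i, p i = 1) (hμ : ∀ i, 1 ≤ μp i) :
    ∃ X : ℕ → ℝ, IsBiddingStrategy X ∧ IsRobust r X ∧
      ∀ Y : ℕ → ℝ, IsBiddingStrategy Y → IsRobust r Y →
        consFin k p μp X ≤ consFin k p μp Y := by
  classical
  obtain ⟨α, hα1, hαhalf, heq, hαlt⟩ := alphaFacts hr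
  have hD : (1:ℝ) ≤ ∑ i, p i * μp i := by
    calc (1:ℝ) = ∑ i, p i := hps.symm
    _ ≤ ∑ i, p i * μp i := Finset.sum_le_sum fun i _ => by nlinarith [hp i, hμ i]
  have hDpos : (0:ℝ) < ∑ i, p i * μp i := lt_of_lt_of_le one_pos hD
  set obj : (ℕ → ℝ) → ℝ := fun X => ∑ i, p i * cost X (μp i) with hobj
  suffices h : ∃ X, IsBiddingStrategy X ∧ IsRobust r X ∧
      ∀ Y, IsBiddingStrategy Y → IsRobust r Y → obj X ≤ obj Y by
    obtain ⟨X, h1, h2, h3⟩ := h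
    refine ⟨X, h1, h2, fun Y hY hRY => ?_⟩
    unfold consFin
    exact (div_le_div_iff_of_pos_right hDpos).mpr (h3 Y hY hRY)
  -- fallback doubling strategy
  have hD2bid : IsBiddingStrategy (fun i => (2:ℝ)^i) := by
    refine ⟨fun a b hab => by exact pow_lt_pow_right₀ one_lt_two hab,
      fun i => pow_pos two_pos i, tendsto_pow_atTop_atTop_of_one_lt one_lt_two⟩
  have hD2rob : IsRobust r (fun i => (2:ℝ)^i) := by
    constructor
    · simpa using by linarith
    · intro i
      have hgeom : ∑ j ∈ Finset.range (i+1), (2:ℝ)^j = 2^(i+1) - 1 := by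
        have := geom_sum_eq (show (2:ℝ) ≠ 1 by norm_num) (i+1)
        rw [this]; norm_num
    
      have h2i : (0:ℝ) < 2^i := pow_pos two_pos i
      simp only [hgeom]
      have : (2:ℝ)^(i+1) = 2 * 2^i := by ring
      nlinarith
  set SS : Set ℝ := {y | ∃ Y, IsBiddingStrategy Y ∧ IsRobust r Y ∧ obj Y = y} with hSS
  set B : ℝ := obj (fun i => (2:ℝ)^i) with hB
  have hSne : B ∈ SS := ⟨_, hD2bid, hD2rob, rfl⟩
  have hSbd : BddBelow SS := by
    refine ⟨0, fun y hy => ?_⟩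
    obtain ⟨Y, hY, _, rfl⟩ := hy
    exact Finset.sum_nonneg fun i _ => mul_nonneg (hp i) (cost_nonneg hY.2.1 _)
  set I : ℝ := sInf SS with hI
  have hIB : I ≤ B := csInf_le hSbd hSne
  -- support max point
  have hTne : (Finset.univ.filter (fun i => 0 < p i)).Nonempty := by
    rcases Finset.eq_empty_or_nonempty (Finset.univ.filter (fun i : Fin k => 0 < p i)) with he | hne
    · exfalso
      have hz : ∑ i, p i = 0 := Finset.sum_eq_zero fun i _ => by
        by_contra hpi
        have hlt : 0 < p i := lt_of_le_of_ne (hp i) (Ne.symm hpi)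
        have : i ∈ Finset.univ.filter (fun i : Fin k => 0 < p i) :=
          Finset.mem_filter.mpr ⟨Finset.mem_univ i, hlt⟩
        rw [he] at this
        simp at this
      rw [hps] at hz
      norm_num at hz
    · exact hne
  obtain ⟨i₀, hi₀mem, hi₀max⟩ := Finset.exists_max_image _ μp hTne
  have hpM : 0 < p i₀ := (Finset.mem_filter.mp hi₀mem).2
  have hMax : ∀ i, 0 < p i → μp i ≤ μp i₀ := fun i hi =>
    hi₀max i (Finset.mem_filter.mpr ⟨Finset.mem_univ i, hi⟩)
  set M : ℝ := μp i₀ with hM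
  have hM1 : 1 ≤ M := hμ i₀
  -- the index bound N
  obtain ⟨N₀, hN₀⟩ := exists_nat_gt ((B+1) / p i₀)
  set N : ℕ := N₀ + 1 with hN
  have hNpM : B + 1 < p i₀ * N := by
    have h1 : B + 1 < N₀ * p i₀ := by
      rw [div_lt_iff₀ hpM] at hN₀
      exact hN₀
    have h2 : (N₀:ℝ) * p i₀ ≤ N * p i₀ := by
      apply mul_le_mul_of_nonneg_right _ hpM.le
      push_cast [hN]; linarith
    linarith [mul_comm (N:ℝ) (p i₀)]
  -- Claim C1
  have hC1 : ∀ Wf, IsBiddingStrategy Wf → IsRobust r Wf → 1 ≤ Wf 0 → obj Wf ≤ B + 1 →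
      M ≤ Wf N := by
    intro Wf hW hRW hW0 hobjW
    by_contra hlt
    push_neg at hlt
    have hall : ∀ j, j ≤ N → Wf j < M := fun j hj =>
      lt_of_le_of_lt (hW.1.monotone hj) hlt
    have hidx : N + 1 ≤ costIdx Wf M := by
      by_contra hcon
      push_neg at hcon
      have h1 : M ≤ Wf (costIdx Wf M) := costIdx_mem (exists_idx_le hW.2.2 M)
      have h2 := hall (costIdx Wf M) (by omega)
      linarith
    have hone : ∀ j, 1 ≤ Wf j := fun j => le_trans hW0 (hW.1.monotone (Nat.zero_le j))
    have h1 : ∑ j ∈ Finset.range (N+2), Wf j ≤ cost Wf M := by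
      apply Finset.sum_le_sum_of_subset_of_nonneg
      · exact Finset.range_subset_range.mpr (by omega)
      · intro j _ _; exact (hW.2.1 j).le
    have h2 : (N:ℝ) ≤ ∑ j ∈ Finset.range (N+2), Wf j := by
      have h3 := Finset.card_nsmul_le_sum (Finset.range (N+2)) Wf 1 (fun x _ => hone x)
      rw [Finset.card_range, nsmul_eq_mul, mul_one] at h3
      have h5 : (N:ℝ) ≤ ((N+2:ℕ):ℝ) := by push_cast; linarith
      linarith
    have h3 : p i₀ * cost Wf M ≤ obj Wf := by
      rw [hobj]
      exact Finset.single_le_sum (f := fun i => p i * cost Wf (μp i))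
        (fun i _ => mul_nonneg (hp i) (cost_nonneg hW.2.1 _)) (Finset.mem_univ i₀)
    have h4 : p i₀ * (N:ℝ) ≤ p i₀ * cost Wf M :=
      mul_le_mul_of_nonneg_left (le_trans h2 h1) hpM.le
    linarith
  -- minimizing sequence
  have hmin : ∀ m : ℕ, ∃ Wm : ℕ → ℝ, IsBiddingStrategy Wm ∧ IsRobust r Wm ∧ 1 ≤ Wm 0 ∧
      obj Wm < I + 1/(m+1) := by
    intro m
    have hpos1 : (0:ℝ) < 1/((m:ℝ)+1) := by positivity
    obtain ⟨y, hymem, hy⟩ := exists_lt_of_csInf_lt ⟨B, hSne⟩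
      (show I < I + 1/((m:ℝ)+1) by linarith)
    obtain ⟨Y, hY, hRY, rfl⟩ := hymem
    obtain ⟨Wm, hWm, hRWm, hWm0, hWmcost⟩ := shiftLemma (by linarith : (0:ℝ) ≤ r) hY hRY
    refine ⟨Wm, hWm, hRWm, hWm0, lt_of_le_of_lt ?_ hy⟩
    exact Finset.sum_le_sum fun i _ =>
      mul_le_mul_of_nonneg_left (hWmcost _ (hμ i)) (hp i)
  choose W hWbid hWrob hW0 hWobj using hmin
  have hWobjB : ∀ m, obj (W m) ≤ B + 1 := by
    intro m
    have h1 : 1/((m:ℝ)+1) ≤ 1 := by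
      rw [div_le_one (by positivity)]
      have : (0:ℝ) ≤ (m:ℝ) := Nat.cast_nonneg m
      linarith
    linarith [hWobj m, hIB]
  have hWMN : ∀ m, M ≤ W m N := fun m => hC1 _ (hWbid m) (hWrob m) (hW0 m) (hWobjB m)
  have hW1 : ∀ m j, 1 ≤ W m j := fun m j =>
    le_trans (hW0 m) ((hWbid m).1.monotone (Nat.zero_le j))
  have hWub : ∀ m j, W m j ≤ r^(j+1) := by
    intro m j
    induction j with
    | zero =>
      have := (hWrob m).1
      simpa using this
    | succ j ih =>
      have h1 := (hWrob m).2 j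
      have h2 : (0:ℝ) ≤ ∑ i ∈ Finset.range (j+1), W m i :=
        Finset.sum_nonneg fun i _ => ((hWbid m).2.1 i).le
      have h3 : r * W m j ≤ r * r^(j+1) :=
        mul_le_mul_of_nonneg_left ih (by linarith)
      have h4 : r * r^(j+1) = r^(j+1+1) := by ring
      linarith
  have hWubN : ∀ m j, j ≤ N → W m j ≤ r^(N+1) := by
    intro m j hj
    refine le_trans (hWub m j) (pow_le_pow_right₀ (by linarith) (by omega))
  have hWS : ∀ m n, ∑ j ∈ Finset.range (n+1), W m j ≤ α * W m n := fun m =>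
    sum_le_alpha hα1 hαhalf heq (hWbid m).2.1 (hWrob m).2
  -- compactness
  set Kc : Set (Fin (N+1) → ℝ) := Set.univ.pi (fun _ => Set.Icc 0 (r^(N+1))) with hKc
  have hKcomp : IsCompact Kc := isCompact_univ_pi fun _ => isCompact_Icc
  set v : ℕ → (Fin (N+1) → ℝ) := fun m j => W m j with hv
  have hvmem : ∀ m, v m ∈ Kc := by
    intro m
    rw [hKc, Set.mem_univ_pi]
    intro j
    exact ⟨le_trans zero_le_one (hW1 m j), hWubN m j (by omega)⟩
  obtain ⟨a, haK, φ, hφ, hconv⟩ := hKcomp.tendsto_subseq hvmem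
  have hcoord : ∀ j : Fin (N+1),
      Filter.Tendsto (fun m => W (φ m) (j:ℕ)) Filter.atTop (nhds (a j)) := by
    intro j
    exact tendsto_pi_nhds.mp hconv j
  set A : ℕ → ℝ := fun t => a ⟨min t N, by omega⟩ with hA
  have hAt : ∀ t, t ≤ N → Filter.Tendsto (fun m => W (φ m) t) Filter.atTop (nhds (A t)) := by
    intro t ht
    have h1 := hcoord ⟨t, by omega⟩
    have h2 : A t = a ⟨t, by omega⟩ := by
      rw [hA]
      exact congrArg a (Fin.ext (show min t N = t by omega))
    rw [h2]
    exact h1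
  have hsumt : ∀ t, t ≤ N → Filter.Tendsto (fun m => ∑ j ∈ Finset.range (t+1), W (φ m) j)
      Filter.atTop (nhds (∑ j ∈ Finset.range (t+1), A j)) := by
    intro t ht
    exact tendsto_finset_sum _ fun j hj =>
      hAt j (by have := Finset.mem_range.mp hj; omega)
  have hA1 : ∀ t, t ≤ N → 1 ≤ A t := fun t ht =>
    ge_of_tendsto (hAt t ht) (Filter.Eventually.of_forall fun m => hW1 _ t)
  have hAr : A 0 ≤ r :=
    le_of_tendsto (hAt 0 (by omega)) (Filter.Eventually.of_forall fun m => (hWrob _).1)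
  have hAminN : ∀ t, A (min t N) = A t := by
    intro t
    rw [hA]
    exact congrArg a (Fin.ext (show min (min t N) N = min t N by omega))
  have hAmono : Monotone A := by
    intro s t hst
    have h1 : min s N ≤ min t N := by omega
    have h2 := le_of_tendsto_of_tendsto' (hAt (min s N) (by omega)) (hAt (min t N) (by omega))
      (fun m => (hWbid _).1.monotone h1)
    rw [hAminN s, hAminN t] at h2
    exact h2
  have hArob : ∀ t, t + 1 ≤ N → A (t+1) ≤ r * A t - ∑ j ∈ Finset.range (t+1), A j := by
    intro t ht
    refine le_of_tendsto_of_tendsto' (hAt (t+1) ht) ?_ (fun m => (hWrob _).2 t)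
    exact (((hAt t (by omega)).const_mul r).sub (hsumt t (by omega)))
  have hAS : ∀ t, t ≤ N → ∑ j ∈ Finset.range (t+1), A j ≤ α * A t := fun t ht =>
    le_of_tendsto_of_tendsto' (hsumt t ht) ((hAt t ht).const_mul α)
      (fun m => hWS _ t)
  have hAM : M ≤ A N :=
    ge_of_tendsto (hAt N le_rfl) (Filter.Eventually.of_forall fun m => hWMN _)
  have hAconst : ∀ t, N ≤ t → A t = A N := by
    intro t ht
    rw [hA]
    exact congrArg a (Fin.ext (show min t N = min N N by omega))
  -- the record recursion
  set J : ℕ → ℕ := fun c => Nat.rec 0 (fun _ jc => sInf {t | A jc < A t}) c with hJdef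
  have hJ0 : J 0 = 0 := rfl
  have hJs : ∀ c, J (c+1) = sInf {t | A (J c) < A t} := fun c => rfl
  have hcex : ∃ c, M ≤ A (J c) := by
    by_contra hno
    push_neg at hno
    have hstrict : ∀ c, J c < J (c+1) := by
      intro c
      have hne : {t | A (J c) < A t}.Nonempty := ⟨N, by exact lt_of_lt_of_le (hno c) hAM⟩
      have hmem : A (J c) < A (J (c+1)) := by rw [hJs]; exact Nat.sInf_mem hne
      by_contra hge
      push_neg at hge
      have := hAmono hge
      linarith
    have hge : ∀ c, c ≤ J c := by
      intro c
      induction c with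
      | zero => omega
      | succ c ih => have := hstrict c; omega
    have h1 := hno (N+1)
    have h2 : A (J (N+1)) = A N := hAconst _ (by have := hge (N+1); omega)
    rw [h2] at h1
    linarith
  set cstar : ℕ := sInf {c | M ≤ A (J c)} with hcstar
  have hcs : M ≤ A (J cstar) := Nat.sInf_mem hcex
  have hcmin : ∀ c, c < cstar → A (J c) < M := by
    intro c hc
    have := Nat.notMem_of_lt_sInf (s := {c | M ≤ A (J c)}) hc
    simpa [Set.mem_setOf_eq, not_le] using this
  have hJmem : ∀ c, c < cstar → A (J c) < A (J (c+1)) := by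
    intro c hc
    rw [hJs]
    have hne : {t : ℕ | A (J c) < A t}.Nonempty := ⟨N, by exact lt_of_lt_of_le (hcmin c hc) hAM⟩
    exact Nat.sInf_mem hne
  have hJmin : ∀ c, c < cstar → ∀ t, t < J (c+1) → A t ≤ A (J c) := by
    intro c hc t htlt
    rw [hJs] at htlt
    have := Nat.notMem_of_lt_sInf (s := {t | A (J c) < A t}) htlt
    simpa [Set.mem_setOf_eq, not_lt] using this
  have hJmono : ∀ c, c < cstar → J c < J (c+1) := by
    intro c hc
    by_contra hge
    push_neg at hge
    have := hAmono hge
    linarith [hJmem c hc]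
  have hJle : ∀ c, c ≤ cstar → J c ≤ N := by
    intro c hc
    cases c with
    | zero => rw [hJ0]; omega
    | succ c =>
      rw [hJs]
      have hmemN : N ∈ {t : ℕ | A (J c) < A t} := by exact lt_of_lt_of_le (hcmin c (by omega)) hAM
      exact Nat.sInf_le hmemN
  have hJsm : ∀ c', c' ≤ cstar → ∀ c, c < c' → J c < J c' := by
    intro c'
    induction c' with
    | zero => intro _ c hc; omega
    | succ c' ih =>
      intro hle c hc
      have hstep := hJmono c' (by omega)
      rcases Nat.lt_succ_iff_lt_or_eq.mp hc with h | h
      · exact lt_trans (ih (by omega) c h) hstep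
      · rw [h]; exact hstep
  set cnt : ℕ := cstar + 1 with hcnt
  set z : ℕ → ℝ := fun c => A (J c) with hz
  have hz1 : ∀ c, c < cnt → 1 ≤ z c := fun c hc => hA1 (J c) (hJle c (by omega))
  have hzmono : ∀ c, c + 1 < cnt → z c < z (c+1) := fun c hc => hJmem c (by omega)
  have hz0r : z 0 ≤ r := by rw [hz]; simp only [hJ0]; exact hAr
  have hZS : ∀ c, c ≤ cstar → ∑ c' ∈ Finset.range (c+1), z c'
      ≤ ∑ t ∈ Finset.range (J c + 1), A t := by
    intro c
    induction c with
    | zero =>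
      intro _
      rw [hz]; simp [hJ0]
    | succ c ih =>
      intro hle
      have h1 : J c + 1 ≤ J (c+1) := hJmono c (by omega)
      rw [Finset.sum_range_succ, Finset.sum_range_succ (f := A) (n := J (c+1))]
      have h2 := ih (by omega)
      have h3 : ∑ t ∈ Finset.range (J c + 1), A t ≤ ∑ t ∈ Finset.range (J (c+1)), A t := by
        apply Finset.sum_le_sum_of_subset_of_nonneg (Finset.range_subset_range.mpr h1)
        intro t htm _
        have htN : t ≤ N := by
          have := Finset.mem_range.mp htm
          have := hJle (c+1) (by omega)
          omega
        linarith [hA1 t htN]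
      have h4 : z (c+1) = A (J (c+1)) := rfl
      rw [h4]
      linarith
  have hzsum : ∑ c ∈ Finset.range cnt, z c ≤ α * z (cnt - 1) := by
    have h1 := hZS cstar le_rfl
    have h2 := hAS (J cstar) (hJle cstar le_rfl)
    have h3 : cnt - 1 = cstar := by omega
    rw [h3]
    calc ∑ c ∈ Finset.range (cstar+1), z c ≤ ∑ t ∈ Finset.range (J cstar + 1), A t := h1
    _ ≤ α * A (J cstar) := h2
    _ = α * z cstar := rfl
  have hrobz : ∀ c, c + 1 < cnt → z (c+1) ≤ r * z c - ∑ i ∈ Finset.range (c+1), z i := by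
    intro c hc
    have hcc : c < cstar := by omega
    have h1 : J c + 1 ≤ J (c+1) := hJmono c hcc
    have hJ1N : J (c+1) ≤ N := hJle (c+1) (by omega)
    set t := J (c+1) - 1 with ht
    have ht1 : t + 1 = J (c+1) := by omega
    have hAt' : A t = A (J c) := by
      apply le_antisymm
      · exact hJmin c hcc t (by omega)
      · exact hAmono (by omega)
    have h2 := hArob t (by omega)
    rw [ht1, hAt'] at h2
    have h3 : ∑ i ∈ Finset.range (c+1), z i ≤ ∑ i ∈ Finset.range (J (c+1)), A i := by
      calc ∑ i ∈ Finset.range (c+1), z i ≤ ∑ i ∈ Finset.range (J c + 1), A i := hZS c (by omega)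
      _ ≤ ∑ i ∈ Finset.range (J (c+1)), A i := by
        apply Finset.sum_le_sum_of_subset_of_nonneg (Finset.range_subset_range.mpr h1)
        intro i him _
        have : i ≤ N := by have := Finset.mem_range.mp him; omega
        linarith [hA1 i this]
    have h4 : z (c+1) = A (J (c+1)) := rfl
    rw [h4]
    have h6 : (r : ℝ) * z c = r * A (J c) := rfl
    linarith
  obtain ⟨X, hXbid, hXrob, hXpre⟩ := extendLemma hα1 heq hαlt cnt (by omega) z
    hz1 hzmono hz0r hrobz hzsum
  refine ⟨X, hXbid, hXrob, ?_⟩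
  have hXI : obj X ≤ I := by
    by_contra hcon
    push_neg at hcon
    set ε : ℝ := obj X - I with hε
    have hεpos : 0 < ε := by linarith
    set δ : ℝ := ε / (2*((N:ℝ)+1)) with hδ
    have hδpos : 0 < δ := by positivity
    set F : (ℕ → ℝ) → ℝ → ℝ := fun g u => ∑ t ∈ Finset.range (N+1),
      if t = 0 ∨ g (t-1) < u then g t else 0 with hF
    have E1 : ∀ᶠ m in Filter.atTop, ∀ t ∈ Finset.range (N+1), A t ≤ W (φ m) t + δ := by
      rw [Filter.eventually_all_finset]
      intro t ht
      have h := hAt t (by have := Finset.mem_range.mp ht; omega)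
      have h2 : ∀ᶠ m in Filter.atTop, A t - δ < W (φ m) t :=
        h.eventually (eventually_gt_nhds (by linarith))
      exact h2.mono fun m hm => by linarith
    have E2 : ∀ᶠ m in Filter.atTop, ∀ t ∈ Finset.range (N+1), ∀ i : Fin k,
        (1 ≤ t ∧ A (t-1) < μp i) → W (φ m) (t-1) < μp i := by
      rw [Filter.eventually_all_finset]
      intro t ht
      rw [Filter.eventually_all]
      intro i
      by_cases hc : 1 ≤ t ∧ A (t-1) < μp i
      · obtain ⟨ht1, hlt⟩ := hc
        have h := hAt (t-1) (by have := Finset.mem_range.mp ht; omega)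
        exact (h.eventually (eventually_lt_nhds hlt)).mono fun m hm _ => hm
      · exact Filter.Eventually.of_forall fun m hm => absurd hm hc
    have E3 : ∀ᶠ m in Filter.atTop, 1/((φ m : ℝ)+1) < ε/2 := by
      obtain ⟨m₀, hm₀⟩ := exists_nat_one_div_lt (half_pos hεpos)
      refine Filter.eventually_atTop.mpr ⟨m₀, fun m hm => ?_⟩
      have h1 : m₀ ≤ φ m := le_trans hm (hφ.le_apply)
      have h2 : ((m₀:ℝ)+1) ≤ ((φ m : ℝ)+1) := by
        have : (m₀:ℝ) ≤ (φ m : ℝ) := Nat.cast_le.mpr h1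
        linarith
      calc 1/((φ m : ℝ)+1) ≤ 1/((m₀:ℝ)+1) := by
            apply one_div_le_one_div_of_le (by positivity) h2
      _ < ε/2 := hm₀
    obtain ⟨m, h1m, h2m, h3m⟩ := ((E1.and (E2.and E3)).exists)
    have hXz : ∀ c, c ≤ cstar → X c = z c := fun c hc => hXpre c (by omega)
    have hcost1 : ∀ u, 1 ≤ u → u ≤ M → cost X u ≤ F A u := by
      intro u hu huM
      have hXcs : u ≤ X cstar := by
        rw [hXz cstar le_rfl]
        exact le_trans huM hcs
      have hidxle : costIdx X u ≤ cstar := costIdx_le hXcs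
      set d := costIdx X u with hd
      have hc1 : cost X u = ∑ c ∈ Finset.range (d+1), A (J c) := by
        apply Finset.sum_congr rfl
        intro c hcm
        rw [hXz c (by have := Finset.mem_range.mp hcm; omega)]
      have hJinj : ∀ x ∈ Finset.range (d+1), ∀ y ∈ Finset.range (d+1),
          J x = J y → x = y := by
        intro x hx y hy hxy
        by_contra hne
        rcases Nat.lt_or_ge x y with h | h
        · have := hJsm y (by have := Finset.mem_range.mp hy; omega) x h
          omega
        · have hyx : y < x := by omega
          have := hJsm x (by have := Finset.mem_range.mp hx; omega) y hyx
          omega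
      have himg : ∑ c ∈ Finset.range (d+1), A (J c)
          = ∑ t ∈ (Finset.range (d+1)).image J, A t := (Finset.sum_image hJinj).symm
      have hsub : (Finset.range (d+1)).image J
          ⊆ (Finset.range (N+1)).filter (fun t => t = 0 ∨ A (t-1) < u) := by
        intro t htm
        obtain ⟨c, hcm, rfl⟩ := Finset.mem_image.mp htm
        have hcd : c ≤ d := by have := Finset.mem_range.mp hcm; omega
        refine Finset.mem_filter.mpr ⟨Finset.mem_range.mpr (by
          have := hJle c (by omega); omega), ?_⟩
        rcases Nat.eq_zero_or_pos c with rfl | hcpos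
        · left; rw [hJ0]
        · right
          have hc1' : c - 1 < cstar := by omega
          have hcc : c = (c-1)+1 := by omega
          have h8 : J ((c-1)+1) = J c := congrArg J hcc.symm
          have hJge : J (c-1) < J c := h8 ▸ hJmono (c-1) hc1'
          have e1 : A (J c - 1) = A (J (c-1)) := by
            apply le_antisymm
            · have h7 : J c - 1 < J ((c-1)+1) := by rw [h8]; omega
              exact hJmin (c-1) hc1' (J c - 1) h7
            · exact hAmono (by omega)
          rw [e1]
          have hlt := lt_of_lt_costIdx (show c - 1 < d by omega)
          rw [hXz (c-1) (by omega)] at hlt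
          exact hlt
      have hFfilter : F A u
          = ∑ t ∈ (Finset.range (N+1)).filter (fun t => t = 0 ∨ A (t-1) < u), A t := by
        rw [hF]
        exact (Finset.sum_filter (fun t => t = 0 ∨ A (t-1) < u) A).symm
      calc cost X u = ∑ t ∈ (Finset.range (d+1)).image J, A t := by rw [hc1, himg]
      _ ≤ ∑ t ∈ (Finset.range (N+1)).filter (fun t => t = 0 ∨ A (t-1) < u), A t := by
          apply Finset.sum_le_sum_of_subset_of_nonneg hsub
          intro t htm _
          have : t ≤ N := by
            have := (Finset.mem_filter.mp htm).1
            have := Finset.mem_range.mp this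
            omega
          linarith [hA1 t this]
      _ = F A u := hFfilter.symm
    have hcost2 : ∀ i : Fin k, F A (μp i) ≤ F (W (φ m)) (μp i) + ((N:ℝ)+1) * δ := by
      intro i
      rw [hF]
      have hterm : ∀ t ∈ Finset.range (N+1),
          (if t = 0 ∨ A (t-1) < μp i then A t else 0)
          ≤ (if t = 0 ∨ W (φ m) (t-1) < μp i then W (φ m) t else 0) + δ := by
        intro t ht
        by_cases hc : t = 0 ∨ A (t-1) < μp i
        · rw [if_pos hc]
          have hWc : t = 0 ∨ W (φ m) (t-1) < μp i := by
            rcases hc with rfl | hlt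
            · exact Or.inl rfl
            · rcases Nat.eq_zero_or_pos t with rfl | ht1
              · exact Or.inl rfl
              · exact Or.inr (h2m t ht i ⟨ht1, hlt⟩)
          rw [if_pos hWc]
          linarith [h1m t ht]
        · rw [if_neg hc]
          have h0 : (0:ℝ) ≤ (if t = 0 ∨ W (φ m) (t-1) < μp i then W (φ m) t else 0) := by
            split_ifs
            · linarith [hW1 (φ m) t]
            · exact le_rfl
          linarith
      calc ∑ t ∈ Finset.range (N+1), (if t = 0 ∨ A (t-1) < μp i then A t else 0)
          ≤ ∑ t ∈ Finset.range (N+1),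
            ((if t = 0 ∨ W (φ m) (t-1) < μp i then W (φ m) t else 0) + δ) :=
            Finset.sum_le_sum hterm
      _ = F (W (φ m)) (μp i) + ((N:ℝ)+1) * δ := by
          rw [Finset.sum_add_distrib, hF]
          congr 1
          rw [Finset.sum_const, Finset.card_range]
          push_cast
          ring
    have hcost3 : ∀ i : Fin k, 0 < p i → F (W (φ m)) (μp i) = cost (W (φ m)) (μp i) := by
      intro i hpi
      rw [hF]
      symm
      apply cost_eq_F (hWbid (φ m)).1
      exact le_trans (hMax i hpi) (hWMN (φ m))
    have hNδ : ((N:ℝ)+1) * δ = ε/2 := by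
      rw [hδ]
      field_simp
    have hobjle : obj X ≤ obj (W (φ m)) + ε/2 := by
      have h1 : ∀ i : Fin k, p i * cost X (μp i)
          ≤ p i * cost (W (φ m)) (μp i) + p i * (ε/2) := by
        intro i
        rcases (hp i).eq_or_lt with hpe | hpos
        · rw [← hpe]; simp
        · have hui : μp i ≤ M := hMax i hpos
          have hc1 := hcost1 (μp i) (hμ i) hui
          have hc2 := hcost2 i
          have hc3 := hcost3 i hpos
          rw [hNδ] at hc2
          have hcx : cost X (μp i) ≤ cost (W (φ m)) (μp i) + ε/2 := by
            rw [← hc3]; linarith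
          calc p i * cost X (μp i) ≤ p i * (cost (W (φ m)) (μp i) + ε/2) :=
              mul_le_mul_of_nonneg_left hcx (hp i)
          _ = p i * cost (W (φ m)) (μp i) + p i * (ε/2) := by ring
      calc obj X = ∑ i, p i * cost X (μp i) := rfl
      _ ≤ ∑ i, (p i * cost (W (φ m)) (μp i) + p i * (ε/2)) :=
          Finset.sum_le_sum fun i _ => h1 i
      _ = obj (W (φ m)) + (∑ i, p i) * (ε/2) := by
          rw [Finset.sum_add_distrib, ← Finset.sum_mul]
      _ = obj (W (φ m)) + ε/2 := by rw [hps]; ring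
    have hlast : obj (W (φ m)) < I + ε/2 := by
      have := hWobj (φ m)
      linarith [h3m]
    have : obj X < I + ε := by linarith
    rw [hε] at this
    linarith
  intro Y hY hRY
  have hIle : I ≤ obj Y := csInf_le hSbd ⟨Y, hY, hRY, rfl⟩
  linarith
end

section
/- For the randomized bidding strategy whose bids are x_i = e^{i+s} with s drawn uniformly from [0,1), and for every target u ≥ 1, the expected cost satisfies ∫_0^1 cost((e^{i+s})_{i≥0}, u) ds = e·u − 1; equivalently, the expected performance ratio equals e − 1/u. -/
open Real MeasureTheory

lemma costIdx_exp (u s : ℝ) (hu : 0 < u) :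
    costIdx (fun i : ℕ => Real.exp ((i : ℝ) + s)) u = ⌈Real.log u - s⌉₊ := by
  have : {i : ℕ | u ≤ Real.exp ((i : ℝ) + s)} = Set.Ici ⌈Real.log u - s⌉₊ := by
    ext i
    rw [Set.mem_setOf_eq, Set.mem_Ici, Nat.ceil_le, sub_le_iff_le_add,
      Real.log_le_iff_le_exp hu]
  rw [costIdx, this, csInf_Ici]

lemma cost_exp (u s : ℝ) (hu : 0 < u) :
    cost (fun i : ℕ => Real.exp ((i : ℝ) + s)) u =
      Real.exp s * ((Real.exp 1) ^ (⌈Real.log u - s⌉₊ + 1) - 1) / (Real.exp 1 - 1) := by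
  have h1 : (Real.exp 1 : ℝ) ≠ 1 := by
    have := Real.exp_one_gt_d9; linarith
  rw [cost, costIdx_exp u s hu]
  have : ∀ j : ℕ, Real.exp ((j : ℝ) + s) = Real.exp s * (Real.exp 1) ^ j := by
    intro j
    rw [Real.exp_add, ← Real.exp_nat_mul]
    ring_nf
  simp_rw [this, ← Finset.mul_sum, geom_sum_eq h1]
  ring

theorem stmt5 (u : ℝ) (hu : 1 ≤ u) :
    (∫ s in (0:ℝ)..1, cost (fun i : ℕ => Real.exp ((i : ℝ) + s)) u) =
        Real.exp 1 * u - 1 ∧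
    (∫ s in (0:ℝ)..1, cost (fun i : ℕ => Real.exp ((i : ℝ) + s)) u) / u =
        Real.exp 1 - 1 / u := by
  have hu0 : (0:ℝ) < u := by linarith
  have hL : 0 ≤ Real.log u := Real.log_nonneg hu
  set L := Real.log u with hLdef
  set n : ℕ := ⌊L⌋₊ with hn
  set t : ℝ := L - n with ht
  have ht0 : 0 ≤ t := by
    rw [ht]; linarith [Nat.floor_le hL]
  have ht1 : t < 1 := by
    rw [ht]; linarith [Nat.lt_floor_add_one L]
  have hE : (1:ℝ) < Real.exp 1 := by
    have := Real.exp_one_gt_d9; linarith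
  have hE1 : Real.exp 1 - 1 ≠ 0 := by linarith
  set f : ℝ → ℝ := fun s => cost (fun i : ℕ => Real.exp ((i : ℝ) + s)) u with hf
  -- ceil values
  have hceil1 : ∀ s ∈ Set.Ioo (0:ℝ) t, ⌈L - s⌉₊ = n + 1 := by
    intro s hs
    rw [Nat.ceil_eq_iff (by omega)]
    constructor
    · have hnt : (n:ℝ) = L - t := by rw [ht]; ring
      simp only [Nat.add_sub_cancel]
      rw [hnt]; linarith [hs.2]
    · push_cast
      have : L < n + 1 := by have := Nat.lt_floor_add_one L; exact_mod_cast this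
      linarith [hs.1]
  have hceil2 : ∀ s ∈ Set.Ioo t (1:ℝ), ⌈L - s⌉₊ = n := by
    intro s hs
    rcases Nat.eq_zero_or_pos n with h0 | hpos
    · rw [h0, Nat.ceil_eq_zero]
      have : L = t := by rw [ht, h0]; simp
      linarith [hs.1]
    · rw [Nat.ceil_eq_iff (by omega)]
      constructor
      · push_cast [hpos]
        have hnt : (n:ℝ) = L - t := by rw [ht]; ring
        rw [hnt]; linarith [hs.2]
      · have : (n:ℝ) = L - t := by rw [ht]; ring
        rw [this]; linarith [hs.1]
  -- piecewise values of f a.e.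
  have hfval : ∀ s : ℝ, f s = Real.exp s * ((Real.exp 1) ^ (⌈L - s⌉₊ + 1) - 1) / (Real.exp 1 - 1) :=
    fun s => cost_exp u s hu0
  set C1 : ℝ := ((Real.exp 1) ^ (n + 2) - 1) / (Real.exp 1 - 1) with hC1
  set C2 : ℝ := ((Real.exp 1) ^ (n + 1) - 1) / (Real.exp 1 - 1) with hC2
  have hae1 : ∀ᵐ s ∂(volume : Measure ℝ), s ∈ Set.uIoc (0:ℝ) t → f s = C1 * Real.exp s := by
    filter_upwards [ae_iff.mpr (by simp : (volume : Measure ℝ) {x | ¬ x ≠ t} = 0)] with s hs hmem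
    rw [Set.uIoc_of_le ht0] at hmem
    have : s ∈ Set.Ioo (0:ℝ) t := ⟨hmem.1, lt_of_le_of_ne hmem.2 hs⟩
    rw [hfval, hceil1 s this, hC1]; ring_nf
  have hae2 : ∀ᵐ s ∂(volume : Measure ℝ), s ∈ Set.uIoc t (1:ℝ) → f s = C2 * Real.exp s := by
    filter_upwards [ae_iff.mpr (by simp : (volume : Measure ℝ) {x | ¬ x ≠ 1} = 0)] with s hs hmem
    rw [Set.uIoc_of_le (le_of_lt ht1)] at hmem
    have : s ∈ Set.Ioo t (1:ℝ) := ⟨hmem.1, lt_of_le_of_ne hmem.2 hs⟩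
    rw [hfval, hceil2 s this, hC2]; ring_nf
  have hint1 : IntervalIntegrable f volume 0 t := by
    apply (((intervalIntegrable_const (c := C1)).mul_continuousOn
      (Real.continuous_exp.continuousOn)).congr_ae)
    rw [Filter.EventuallyEq, ae_restrict_iff' measurableSet_uIoc]
    filter_upwards [hae1] with s h hs
    exact (h hs).symm
  have hint2 : IntervalIntegrable f volume t 1 := by
    apply (((intervalIntegrable_const (c := C2)).mul_continuousOn
      (Real.continuous_exp.continuousOn)).congr_ae)
    rw [Filter.EventuallyEq, ae_restrict_iff' measurableSet_uIoc]
    filter_upwards [hae2] with s h hs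
    exact (h hs).symm
  have hsplit : (∫ s in (0:ℝ)..1, f s) = (∫ s in (0:ℝ)..t, f s) + ∫ s in t..(1:ℝ), f s :=
    (intervalIntegral.integral_add_adjacent_intervals hint1 hint2).symm
  have hI1 : (∫ s in (0:ℝ)..t, f s) = C1 * (Real.exp t - 1) := by
    rw [intervalIntegral.integral_congr_ae hae1, intervalIntegral.integral_const_mul,
      integral_exp, Real.exp_zero]
  have hI2 : (∫ s in t..(1:ℝ), f s) = C2 * (Real.exp 1 - Real.exp t) := by
    rw [intervalIntegral.integral_congr_ae hae2, intervalIntegral.integral_const_mul,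
      integral_exp]
  have hexpnt : Real.exp ((n : ℝ)) * Real.exp t = u := by
    rw [← Real.exp_add]
    have : (n:ℝ) + t = L := by rw [ht]; ring
    rw [this, hLdef, Real.exp_log hu0]
  have hpow : (Real.exp 1) ^ (n : ℕ) = Real.exp ((n:ℝ)) := by
    rw [← Real.exp_nat_mul]; ring_nf
  have e1 : Real.exp 1 ^ (n+1) = Real.exp ((n:ℝ)) * Real.exp 1 := by rw [pow_succ, hpow]
  have e2 : Real.exp 1 ^ (n+2) = Real.exp ((n:ℝ)) * Real.exp 1 * Real.exp 1 := by
    rw [pow_succ, e1]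
  have key : (∫ s in (0:ℝ)..1, f s) = Real.exp 1 * u - 1 := by
    rw [hsplit, hI1, hI2, hC1, hC2, e1, e2]
    field_simp
    linear_combination (Real.exp 1 ^ 2 - Real.exp 1) * hexpnt
  refine ⟨key, ?_⟩
  rw [key]; field_simp
end

section
/- Let a > 1, δ ∈ [0,1), λ ∈ [1,a), j ∈ ℕ, and set û = λ·a^{j+δ}. For the randomized strategy R_{δ,a} whose bids are x_i = λ·a^{i+s} with s drawn uniformly from [δ,1), the consistency satisfies (1/((1−δ)·û)) · ∫_δ^1 cost((λ a^{i+s})_{i≥0}, û) ds ≤ a(a−a^δ) / (a^δ (a−1)(1−δ) ln a). -/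
lemma costIdx_eq (a δ lam s : ℝ) (j : ℕ) (ha : 1 < a) (hlam : 0 < lam)
    (hδ : 0 ≤ δ) (hs1 : δ ≤ s) (hs2 : s < 1) :
    costIdx (fun i : ℕ => lam * a ^ ((i : ℝ) + s)) (lam * a ^ ((j : ℝ) + δ)) = j := by
  have key : ∀ i : ℕ, (lam * a ^ ((j : ℝ) + δ) ≤ lam * a ^ ((i : ℝ) + s)) ↔
      ((j : ℝ) + δ ≤ (i : ℝ) + s) := by
    intro i
    rw [mul_le_mul_iff_right₀ hlam, Real.rpow_le_rpow_left_iff ha]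
  have hj : j ∈ {i : ℕ | lam * a ^ ((j : ℝ) + δ) ≤ lam * a ^ ((i : ℝ) + s)} := by
    rw [Set.mem_setOf_eq, key]; linarith
  refine le_antisymm (Nat.sInf_le hj) (le_csInf ⟨j, hj⟩ ?_)
  intro i hi
  rw [Set.mem_setOf_eq, key] at hi
  by_contra h
  push_neg at h
  have : (i : ℝ) + 1 ≤ (j : ℝ) := by exact_mod_cast h
  linarith

theorem stmt6 (a δ lam : ℝ) (j : ℕ) (ha : 1 < a) (hδ : δ ∈ Set.Ico (0:ℝ) 1)
    (hlam : lam ∈ Set.Ico (1:ℝ) a) :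
    (1 / ((1 - δ) * (lam * a ^ ((j : ℝ) + δ)))) *
        (∫ s in δ..1,
          cost (fun i : ℕ => lam * a ^ ((i : ℝ) + s)) (lam * a ^ ((j : ℝ) + δ))) ≤
      a * (a - a ^ δ) / (a ^ δ * (a - 1) * (1 - δ) * Real.log a) := by
  obtain ⟨hδ0, hδ1⟩ := hδ
  obtain ⟨hlam1, hlama⟩ := hlam
  have ha0 : 0 < a := lt_trans one_pos ha
  have hlam0 : (0:ℝ) < lam := lt_of_lt_of_le one_pos hlam1
  have hloga : 0 < Real.log a := Real.log_pos ha
  set C : ℝ := lam * ∑ i ∈ Finset.range (j + 1), a ^ (i : ℝ) with hC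
  -- step 1: rewrite integrand a.e. as C * a^s
  have hae : ∫ s in δ..1,
      cost (fun i : ℕ => lam * a ^ ((i : ℝ) + s)) (lam * a ^ ((j : ℝ) + δ))
      = ∫ s in δ..1, C * a ^ s := by
    refine intervalIntegral.integral_congr_ae ?_
    have hnull : (MeasureTheory.volume : MeasureTheory.Measure ℝ) {(1:ℝ)} = 0 :=
      MeasureTheory.measure_singleton 1
    filter_upwards [MeasureTheory.measure_eq_zero_iff_ae_notMem.mp hnull] with s hs hs'
    rw [Set.uIoc_of_le hδ1.le] at hs'
    have hs2 : s < 1 := lt_of_le_of_ne hs'.2 (by simpa using hs)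
    have hs1 : δ < s := hs'.1
    unfold cost
    rw [costIdx_eq a δ lam s j ha hlam0 hδ0 hs1.le hs2]
    simp only [hC, Finset.mul_sum, Finset.sum_mul]
    refine Finset.sum_congr rfl fun i _ => ?_
    rw [Real.rpow_add ha0]; ring
  rw [hae]
  -- step 2: compute the integral
  have hint : ∫ s in δ..1, C * a ^ s = C * ((a ^ (1:ℝ) - a ^ δ) / Real.log a) := by
    rw [intervalIntegral.integral_const_mul]
    congr 1
    have hderiv : ∀ x ∈ Set.uIcc δ 1, HasDerivAt (fun s => a ^ s / Real.log a)
        (a ^ x) x := by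
      intro x _
      have := (Real.hasStrictDerivAt_const_rpow ha0 x).hasDerivAt.div_const (Real.log a)
      convert this using 1
      · rfl
      · rfl
      · field_simp
    have hcont : IntervalIntegrable (fun s => a ^ s) MeasureTheory.volume δ 1 :=
      (continuous_const.rpow continuous_id fun x => Or.inl (ne_of_gt ha0)).intervalIntegrable δ 1
    rw [intervalIntegral.integral_eq_sub_of_hasDerivAt hderiv hcont]
    ring
  rw [hint]
  -- step 3: the inequality
  have hsum : ∑ i ∈ Finset.range (j + 1), a ^ (i : ℝ)
      = (a ^ (j + 1) - 1) / (a - 1) := by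
    have : ∀ i ∈ Finset.range (j+1), a ^ (i : ℝ) = a ^ i := fun i _ =>
      Real.rpow_natCast a i
    rw [Finset.sum_congr rfl this, geom_sum_eq (ne_of_gt ha)]
  have hδpow : (0:ℝ) < a ^ δ := Real.rpow_pos_of_pos ha0 δ
  have hjpow : (0:ℝ) < a ^ ((j:ℝ) + δ) := Real.rpow_pos_of_pos ha0 _
  have haδ : a ^ δ < a := by
    calc a ^ δ < a ^ (1:ℝ) := Real.rpow_lt_rpow_left_iff ha |>.mpr hδ1
    _ = a := Real.rpow_one a
  rw [Real.rpow_one, hC, hsum]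
  -- clean form
  have hjδ : a ^ ((j:ℝ) + δ) = a ^ j * a ^ δ := by
    rw [Real.rpow_add ha0, Real.rpow_natCast]
  have hajpos : (0:ℝ) < a ^ j := pow_pos ha0 j
  rw [hjδ]
  have h1δ : (0:ℝ) < 1 - δ := by linarith
  have hD : (0:ℝ) < a ^ δ * (a - 1) * (1 - δ) * Real.log a :=
    mul_pos (mul_pos (mul_pos hδpow (by linarith)) h1δ) hloga
  rw [le_div_iff₀ hD]
  have expand : (1 / ((1 - δ) * (lam * (a ^ j * a ^ δ))) *
      (lam * ((a ^ (j + 1) - 1) / (a - 1)) * ((a - a ^ δ) / Real.log a))) *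
      (a ^ δ * (a - 1) * (1 - δ) * Real.log a)
      = (a ^ (j+1) - 1) * (a - a ^ δ) / a ^ j := by
    have h1 : (1 - δ) ≠ 0 := ne_of_gt h1δ
    have h2 : a - 1 ≠ 0 := by linarith
    have h3 : Real.log a ≠ 0 := ne_of_gt hloga
    have h4 : lam ≠ 0 := ne_of_gt hlam0
    have h5 : (a:ℝ) ^ j ≠ 0 := ne_of_gt hajpos
    have h6 : a ^ δ ≠ 0 := ne_of_gt hδpow
    field_simp
  rw [expand]
  rw [div_le_iff₀ hajpos]
  have : a * (a - a ^ δ) * (a ^ j) = a ^ (j+1) * (a - a^δ) := by ring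
  rw [this]
  have : 0 ≤ a - a ^ δ := by linarith
  nlinarith [pow_pos ha0 (j+1)]
end

section
/- Let a > 1, δ ∈ [0,1), and λ ∈ [1,a). For the randomized strategy R_{δ,a} whose bids are x_i = λ·a^{i+s} with s drawn uniformly from [δ,1), and for every target u ≥ λ, the expected performance ratio satisfies (1/((1−δ)·u)) · ∫_δ^1 cost((λ a^{i+s})_{i≥0}, u) ds ≤ a(a−a^δ) / ((a−1)(1−δ) ln a). -/
open Real MeasureTheory

lemma exp_integral (c p q : ℝ) (hc : c ≠ 0) :
    ∫ s in p..q, Real.exp (c * s) = (Real.exp (c * q) - Real.exp (c * p)) / c := by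
  have h : ∀ x ∈ Set.uIcc p q,
      HasDerivAt (fun s => Real.exp (c * s) / c) (Real.exp (c * x)) x := by
    intro x _
    have h1 : HasDerivAt (fun s : ℝ => c * s) c x := by
      simpa using (hasDerivAt_id x).const_mul c
    have h2 := ((Real.hasDerivAt_exp (c * x)).comp x h1).div_const c
    simpa [mul_div_assoc, mul_div_cancel_right₀ _ hc] using h2
  rw [intervalIntegral.integral_eq_sub_of_hasDerivAt h
    ((Real.continuous_exp.comp (continuous_const.mul continuous_id)).intervalIntegrable p q)]
  ring

lemma cont_rpow (a : ℝ) (ha : 0 < a) : Continuous (fun s : ℝ => a ^ s) := by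
  simp only [Real.rpow_def_of_pos ha]
  exact Real.continuous_exp.comp (continuous_const.mul continuous_id)

lemma rpow_integral (a p q : ℝ) (ha : 1 < a) :
    ∫ s in p..q, a ^ s = (a ^ q - a ^ p) / Real.log a := by
  have ha0 : (0:ℝ) < a := lt_trans one_pos ha
  have hlog : Real.log a ≠ 0 := ne_of_gt (Real.log_pos ha)
  have key : ∀ s : ℝ, a ^ s = Real.exp (Real.log a * s) := fun s =>
    Real.rpow_def_of_pos ha0 s
  simp_rw [key]
  rw [exp_integral _ _ _ hlog]

lemma sum_integral (a lam p q : ℝ) (ha : 1 < a) (n : ℕ) :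
    ∫ s in p..q, ∑ j ∈ Finset.range n, lam * a ^ ((j:ℝ) + s)
      = (∑ j ∈ Finset.range n, lam * a ^ (j:ℝ)) * ((a ^ q - a ^ p) / Real.log a) := by
  have ha0 : (0:ℝ) < a := lt_trans one_pos ha
  rw [intervalIntegral.integral_finset_sum]
  · rw [Finset.sum_mul]
    refine Finset.sum_congr rfl fun j _ => ?_
    have key : ∀ s : ℝ, lam * a ^ ((j:ℝ) + s) = (lam * a ^ (j:ℝ)) * a ^ s := fun s => by
      rw [Real.rpow_add ha0, mul_assoc]
    simp_rw [key]
    rw [intervalIntegral.integral_const_mul, rpow_integral a p q ha]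
  · intro j _
    exact ((continuous_const.mul
      ((cont_rpow a ha0).comp (continuous_const.add continuous_id))).intervalIntegrable p q)

lemma cost_eq_sum (a lam u s : ℝ) (ha : 1 < a) (hlam : 0 < lam) (hu : 0 < u) :
    cost (fun i : ℕ => lam * a ^ ((i : ℝ) + s)) u
      = ∑ j ∈ Finset.range ((⌈Real.logb a (u / lam) - s⌉).toNat + 1),
          lam * a ^ ((j:ℝ) + s) := by
  have ha0 : (0:ℝ) < a := lt_trans one_pos ha
  have hidx : costIdx (fun i : ℕ => lam * a ^ ((i : ℝ) + s)) u
      = (⌈Real.logb a (u / lam) - s⌉).toNat := by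
    set t := Real.logb a (u / lam) with ht
    have hat : lam * a ^ t = u := by
      rw [ht, Real.rpow_logb ha0 (ne_of_gt ha) (div_pos hu hlam)]
      field_simp
    have hset : {i : ℕ | u ≤ lam * a ^ ((i : ℝ) + s)} = Set.Ici (⌈t - s⌉).toNat := by
      ext i
      simp only [Set.mem_setOf_eq, Set.mem_Ici]
      rw [← hat, mul_le_mul_iff_right₀ hlam, Real.rpow_le_rpow_left_iff ha, ← sub_le_iff_le_add,
        show ((i:ℝ)) = (((i:ℤ)):ℝ) by push_cast; ring, ← Int.ceil_le, Int.toNat_le]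
    unfold costIdx
    rw [hset, csInf_Ici]
  unfold cost
  rw [hidx]

theorem stmt7 (a δ lam : ℝ) (ha : 1 < a) (hδ : δ ∈ Set.Ico (0:ℝ) 1)
    (hlam : lam ∈ Set.Ico (1:ℝ) a) (u : ℝ) (hu : lam ≤ u) :
    (1 / ((1 - δ) * u)) *
        (∫ s in δ..1, cost (fun i : ℕ => lam * a ^ ((i : ℝ) + s)) u) ≤
      a * (a - a ^ δ) / ((a - 1) * (1 - δ) * Real.log a) := by
  obtain ⟨hδ0, hδ1⟩ := hδ
  obtain ⟨hlam1, hlama⟩ := hlam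
  have ha0 : (0:ℝ) < a := lt_trans one_pos ha
  have hlam0 : (0:ℝ) < lam := lt_of_lt_of_le one_pos hlam1
  have hu0 : (0:ℝ) < u := lt_of_lt_of_le hlam0 hu
  have hlogpos : 0 < Real.log a := Real.log_pos ha
  have ha1 : (0:ℝ) < a - 1 := by linarith
  set t := Real.logb a (u / lam) with ht
  have hlu : lam * a ^ t = u := by
    rw [ht, Real.rpow_logb ha0 (ne_of_gt ha) (div_pos hu0 hlam0)]
    field_simp
  have ht0 : 0 ≤ t := Real.logb_nonneg ha ((one_le_div hlam0).2 hu)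
  set m : ℤ := ⌈t - δ⌉ with hm
  have hm0 : (0:ℤ) ≤ m := by
    have h' : (-1 : ℤ) < m := Int.lt_ceil.2 (by push_cast; linarith)
    omega
  have hmge : t - δ ≤ (m:ℝ) := Int.le_ceil _
  have hmlt : (m:ℝ) < t - δ + 1 := Int.ceil_lt_add_one _
  set c : ℝ := t + 1 - (m:ℝ) with hc
  have hδc : δ < c := by rw [hc]; linarith
  have hAδ : (1:ℝ) ≤ a ^ δ := by
    have h' := Real.rpow_le_rpow_of_exponent_le (le_of_lt ha) hδ0
    simpa using h'
  have hane : a - 1 ≠ 0 := ne_of_gt ha1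
  have hlogne : Real.log a ≠ 0 := ne_of_gt hlogpos
  have hAδa : a ^ δ ≤ a := by
    calc a ^ δ ≤ a ^ (1:ℝ) :=
          Real.rpow_le_rpow_of_exponent_le (le_of_lt ha) (le_of_lt hδ1)
      _ = a := Real.rpow_one a
  have hmR : ((m.toNat : ℕ) : ℝ) = (m:ℝ) := by exact_mod_cast Int.toNat_of_nonneg hm0
  have hceil1 : ∀ s : ℝ, δ ≤ s → s < c → ⌈t - s⌉ = m := by
    intro s h1 h2
    rw [hc] at h2
    rw [Int.ceil_eq_iff]
    exact ⟨by linarith, by linarith⟩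
  have hcosts : ∀ s : ℝ, cost (fun i : ℕ => lam * a ^ ((i:ℝ) + s)) u
      = ∑ j ∈ Finset.range ((⌈t - s⌉).toNat + 1), lam * a ^ ((j:ℝ) + s) := by
    intro s
    rw [ht]
    exact cost_eq_sum a lam u s ha hlam0 hu0
  have hne_c : ∀ᵐ x : ℝ ∂volume, x ≠ c := by
    have hs : {x : ℝ | ¬ x ≠ c} = {c} := by ext x; simp
    rw [MeasureTheory.ae_iff, hs]
    exact measure_singleton c
  have hSsum : ∀ n : ℕ, ∑ j ∈ Finset.range n, lam * a ^ (j:ℝ)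
      = lam * ((a ^ (n:ℝ) - 1) / (a - 1)) := by
    intro n
    rw [← Finset.mul_sum]
    congr 1
    have h' : ∀ j ∈ Finset.range n, a ^ (j:ℝ) = a ^ j := fun j _ => Real.rpow_natCast a j
    rw [Finset.sum_congr rfl h', geom_sum_eq (ne_of_gt ha), Real.rpow_natCast]
  suffices hI : (∫ s in δ..1, cost (fun i : ℕ => lam * a ^ ((i:ℝ) + s)) u)
      ≤ lam * a ^ (t + 1) * ((a - a ^ δ) / ((a - 1) * Real.log a)) by
    have hQ : lam * a ^ (t + 1) = u * a := by
      rw [Real.rpow_add ha0, Real.rpow_one, ← mul_assoc, hlu]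
    rw [hQ] at hI
    have h1δ : (0:ℝ) < 1 - δ := by linarith
    calc (1 / ((1 - δ) * u)) * (∫ s in δ..1, cost (fun i : ℕ => lam * a ^ ((i:ℝ) + s)) u)
        ≤ (1 / ((1 - δ) * u)) * (u * a * ((a - a ^ δ) / ((a - 1) * Real.log a))) := by
          apply mul_le_mul_of_nonneg_left hI (by positivity)
      _ = a * (a - a ^ δ) / ((a - 1) * (1 - δ) * Real.log a) := by
          field_simp
  by_cases hcase : 1 ≤ c
  · have hmt : (m:ℝ) ≤ t := by rw [hc] at hcase; linarith
    have hIeq : (∫ s in δ..1, cost (fun i : ℕ => lam * a ^ ((i:ℝ) + s)) u)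
        = ∫ s in δ..1, ∑ j ∈ Finset.range (m.toNat + 1), lam * a ^ ((j:ℝ) + s) := by
      apply intervalIntegral.integral_congr_ae
      filter_upwards [hne_c] with s hsne hs
      rw [Set.uIoc_of_le (le_of_lt hδ1)] at hs
      rw [hcosts s, hceil1 s (le_of_lt hs.1) (lt_of_le_of_ne (le_trans hs.2 hcase) hsne)]
    rw [hIeq, sum_integral a lam δ 1 ha, hSsum, Real.rpow_one]
    push_cast [hmR]
    have hP : a ^ ((m:ℝ) + 1) ≤ a ^ (t + 1) :=
      Real.rpow_le_rpow_of_exponent_le (le_of_lt ha) (by linarith)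
    have key : (a ^ ((m:ℝ) + 1) - 1) * (a - a ^ δ) ≤ a ^ (t + 1) * (a - a ^ δ) := by
      apply mul_le_mul_of_nonneg_right (by linarith) (by linarith)
    calc lam * ((a ^ ((m:ℝ) + 1) - 1) / (a - 1)) * ((a - a ^ δ) / Real.log a)
        = (lam / ((a - 1) * Real.log a)) * ((a ^ ((m:ℝ) + 1) - 1) * (a - a ^ δ)) := by
          field_simp
      _ ≤ (lam / ((a - 1) * Real.log a)) * (a ^ (t + 1) * (a - a ^ δ)) := by
          apply mul_le_mul_of_nonneg_left key (by positivity)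
      _ = lam * a ^ (t + 1) * ((a - a ^ δ) / ((a - 1) * Real.log a)) := by
          field_simp
  · push_neg at hcase
    have htm : t < (m:ℝ) := by rw [hc] at hcase; linarith
    have hm1 : (1:ℤ) ≤ m := by
      have h' : (0:ℤ) < m := by exact_mod_cast lt_of_le_of_lt ht0 htm
      omega
    have hmn : (m - 1).toNat + 1 = m.toNat := by omega
    have hceil2 : ∀ s : ℝ, c < s → s ≤ 1 → ⌈t - s⌉ = m - 1 := by
      intro s h1 h2
      rw [hc] at h1
      rw [Int.ceil_eq_iff]
      constructor
      · push_cast; linarith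
      · push_cast; linarith
    have hcont : ∀ n : ℕ, Continuous (fun s : ℝ =>
        ∑ j ∈ Finset.range n, lam * a ^ ((j:ℝ) + s)) := by
      intro n
      apply continuous_finset_sum
      intro j _
      exact continuous_const.mul ((cont_rpow a ha0).comp (continuous_const.add continuous_id))
    have hcong1 : ∀ᵐ x ∂volume, x ∈ Set.uIoc δ c →
        cost (fun i : ℕ => lam * a ^ ((i:ℝ) + x)) u
          = ∑ j ∈ Finset.range (m.toNat + 1), lam * a ^ ((j:ℝ) + x) := by
      filter_upwards [hne_c] with s hsne hs
      rw [Set.uIoc_of_le (le_of_lt hδc)] at hs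
      rw [hcosts s, hceil1 s (le_of_lt hs.1) (lt_of_le_of_ne hs.2 hsne)]
    have hcong2 : ∀ᵐ x ∂volume, x ∈ Set.uIoc c 1 →
        cost (fun i : ℕ => lam * a ^ ((i:ℝ) + x)) u
          = ∑ j ∈ Finset.range m.toNat, lam * a ^ ((j:ℝ) + x) := by
      filter_upwards with s hs
      rw [Set.uIoc_of_le (le_of_lt hcase)] at hs
      rw [hcosts s, hceil2 s hs.1 hs.2, hmn]
    have hC1 : IntervalIntegrable (fun s => cost (fun i : ℕ => lam * a ^ ((i:ℝ) + s)) u)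
        volume δ c := by
      apply ((hcont (m.toNat + 1)).intervalIntegrable δ c).congr_ae
      rw [Filter.EventuallyEq, MeasureTheory.ae_restrict_iff' measurableSet_uIoc]
      filter_upwards [hcong1] with s h hs
      exact (h hs).symm
    have hC2 : IntervalIntegrable (fun s => cost (fun i : ℕ => lam * a ^ ((i:ℝ) + s)) u)
        volume c 1 := by
      apply ((hcont m.toNat).intervalIntegrable c 1).congr_ae
      rw [Filter.EventuallyEq, MeasureTheory.ae_restrict_iff' measurableSet_uIoc]
      filter_upwards [hcong2] with s h hs
      exact (h hs).symm
    rw [← intervalIntegral.integral_add_adjacent_intervals hC1 hC2,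
      intervalIntegral.integral_congr_ae hcong1, intervalIntegral.integral_congr_ae hcong2,
      sum_integral a lam δ c ha, sum_integral a lam c 1 ha, hSsum, hSsum, Real.rpow_one]
    push_cast [hmR]
    have hMa : a ^ ((m:ℝ) + 1) = a ^ (m:ℝ) * a := by
      rw [Real.rpow_add ha0, Real.rpow_one]
    have hMC : a ^ (m:ℝ) * a ^ c = a ^ (t + 1) := by
      rw [← Real.rpow_add ha0, hc]
      congr 1
      ring
    have hTMa : a ^ (t + 1) ≤ a ^ (m:ℝ) * a := by
      rw [← hMa]
      exact Real.rpow_le_rpow_of_exponent_le (le_of_lt ha) (by linarith)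
    have hprod : 0 ≤ (a ^ δ - 1) * (a ^ (m:ℝ) * a - a ^ (t + 1)) :=
      mul_nonneg (by linarith) (by linarith)
    have hexp : (a ^ (m:ℝ) * a - 1) * (a ^ c - a ^ δ) + (a ^ (m:ℝ) - 1) * (a - a ^ c)
        = a ^ (t + 1) * a - a ^ (m:ℝ) * a * a ^ δ + a ^ δ + a ^ (m:ℝ) * a
          - a ^ (t + 1) - a := by
      rw [← hMC]; ring
    have key : (a ^ (m:ℝ) * a - 1) * (a ^ c - a ^ δ) + (a ^ (m:ℝ) - 1) * (a - a ^ c)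
        ≤ a ^ (t + 1) * (a - a ^ δ) := by
      rw [hexp]
      nlinarith [hprod, hAδa]
    calc lam * ((a ^ ((m:ℝ) + 1) - 1) / (a - 1)) * ((a ^ c - a ^ δ) / Real.log a)
          + lam * ((a ^ (m:ℝ) - 1) / (a - 1)) * ((a - a ^ c) / Real.log a)
        = (lam / ((a - 1) * Real.log a)) *
            ((a ^ (m:ℝ) * a - 1) * (a ^ c - a ^ δ) + (a ^ (m:ℝ) - 1) * (a - a ^ c)) := by
          rw [hMa]
          field_simp
      _ ≤ (lam / ((a - 1) * Real.log a)) * (a ^ (t + 1) * (a - a ^ δ)) := by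
          apply mul_le_mul_of_nonneg_left key (by positivity)
      _ = lam * a ^ (t + 1) * ((a - a ^ δ) / ((a - 1) * Real.log a)) := by
          field_simp
end

section
/- Let ε ∈ (0,1), R = exp((1−ε)/ε), and let D_ε be the probability measure on [1,R] with density t ↦ ε/t on [1,R) together with an atom of mass ε at R. Let n ∈ ℕ and let 1 ≤ x_0 < x_1 < ⋯ < x_n be reals with x_{n−1} < R ≤ x_n. Then ∫ cost(X,u)/u dD_ε(u) ≥ (1−ε)·e, where X = (x_i)_{i=0}^{n}. -/
open MeasureTheory
open scoped ENNReal NNReal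

/-- The measure `D_ε` on `[1,R]`: density `t ↦ ε / t` on `[1,R)` together with
an atom of mass `ε` at `R`. -/
noncomputable def Deps (ε R : ℝ) : Measure ℝ :=
  ((volume.restrict (Set.Ico (1:ℝ) R)).withDensity fun t => ENNReal.ofReal (ε / t))
    + (ENNReal.ofReal ε) • Measure.dirac R

/-- If `x j < u` for all `j < i` and `u ≤ x i`, then `costIdx x u = i`. -/
lemma costIdx_eq_s8 (x : ℕ → ℝ) (i : ℕ) (u : ℝ) (hlow : ∀ j, j < i → x j < u)
    (hup : u ≤ x i) : costIdx x u = i := by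
  have hi : i ∈ {j : ℕ | u ≤ x j} := hup
  have hmem := Nat.sInf_mem ⟨i, hi⟩
  have hle : sInf {j : ℕ | u ≤ x j} ≤ i := Nat.sInf_le hi
  rcases lt_or_eq_of_le hle with h | h
  · exact absurd hmem (not_le.2 (hlow _ h))
  · exact h

/-- Abel-summation identity. -/
lemma abel_id (x z : ℕ → ℝ) (m : ℕ) :
    (∑ i ∈ Finset.range (m+1), (∑ j ∈ Finset.range (i+1), x j) * (z i - z (i+1)))
      + (∑ j ∈ Finset.range (m+1), x j) * z (m+1)
    = ∑ j ∈ Finset.range (m+1), x j * z j := by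
  induction m with
  | zero => simp; ring
  | succ k ih =>
    rw [Finset.sum_range_succ (fun i => (∑ j ∈ Finset.range (i+1), x j) * (z i - z (i+1)))]
    rw [Finset.sum_range_succ (fun j => x j * z j)]
    have h2 : ∑ j ∈ Finset.range (k+1+1), x j = (∑ j ∈ Finset.range (k+1), x j) + x (k+1) :=
      Finset.sum_range_succ x (k+1)
    rw [h2]
    linear_combination ih

lemma elog_le (p : ℝ) (hp : 0 < p) : Real.exp 1 * Real.log p ≤ p := by
  have h := Real.log_le_sub_one_of_pos (x := p / Real.exp 1) (by positivity)
  rw [Real.log_div (ne_of_gt hp) (ne_of_gt (Real.exp_pos 1)), Real.log_exp] at h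
  have he : (0:ℝ) < Real.exp 1 := Real.exp_pos 1
  have h2 : Real.log p ≤ p / Real.exp 1 := by linarith
  calc Real.exp 1 * Real.log p ≤ Real.exp 1 * (p / Real.exp 1) := by
        exact mul_le_mul_of_nonneg_left h2 he.le
  _ = p := by field_simp

theorem stmt8 (ε : ℝ) (hε : ε ∈ Set.Ioo (0:ℝ) 1) (R : ℝ)
    (hR : R = Real.exp ((1 - ε) / ε))
    (n : ℕ) (x : ℕ → ℝ) (hx0 : 1 ≤ x 0) (hmono : ∀ i, i < n → x i < x (i + 1))
    (hxn : R ≤ x n) (hprev : ∀ i, i < n → x i < R) :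
    (1 - ε) * Real.exp 1 ≤ ∫ u, cost x u / u ∂(Deps ε R) := by
  obtain ⟨hε0, hε1⟩ := hε
  set L : ℝ := (1 - ε) / ε with hLdef
  have hL0 : 0 < L := div_pos (by linarith) hε0
  have hR1 : 1 < R := by
    rw [hR]
    calc (1:ℝ) = Real.exp 0 := (Real.exp_zero).symm
    _ < Real.exp L := Real.exp_lt_exp.2 hL0
  -- monotonicity of x up to n
  have hxmono : ∀ j, j ≤ n → ∀ i, i ≤ j → x i ≤ x j := by
    intro j
    induction j with
    | zero => intro _ i hi; interval_cases i; exact le_refl _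
    | succ k ih =>
      intro hk i hi
      rcases Nat.lt_succ_iff_lt_or_eq.mp (Nat.lt_succ_of_le hi) with h | h
      · exact le_trans (ih (by omega) i (by omega)) (le_of_lt (hmono k (by omega)))
      · rw [h]
  have hx1 : ∀ j, j ≤ n → 1 ≤ x j := fun j hj => le_trans hx0 (hxmono j hj 0 (Nat.zero_le _))
  -- partial sums
  set S : ℕ → ℝ := fun i => ∑ j ∈ Finset.range (i+1), x j with hSdef
  have hSle : ∀ i, i ≤ n → S i ≤ S n := by
    intro i hi
    apply Finset.sum_le_sum_of_subset_of_nonneg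
    · exact Finset.range_subset_range.2 (by omega)
    · intro j hj _
      simp only [Finset.mem_range] at hj
      exact le_trans zero_le_one (hx1 j (by omega))
  have hSpos : ∀ i, i ≤ n → 0 < S i := by
    intro i hi
    apply Finset.sum_pos
    · intro j hj
      simp only [Finset.mem_range] at hj
      exact lt_of_lt_of_le zero_lt_one (hx1 j (by omega))
    · exact ⟨0, by simp⟩
  -- breakpoints
  set c : ℕ → ℝ := fun i => if i = 0 then 1 else if i ≤ n then x (i-1) else R with hcdef
  have hc0 : c 0 = 1 := by simp [hcdef]
  have hclast : c (n+1) = R := by simp [hcdef]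
  have hceq : ∀ i, i < n → c (i+1) = x i := by
    intro i hi; simp only [hcdef]
    rw [if_neg (by omega), if_pos (by omega)]
    norm_num
  have hc1 : ∀ i, 1 ≤ c i := by
    intro i
    simp only [hcdef]
    split
    · exact le_refl 1
    · split
      · exact hx1 _ (by omega)
      · exact le_of_lt hR1
  have hcmono1 : ∀ i, i ≤ n → c i ≤ c (i+1) := by
    intro i hi
    rcases Nat.eq_zero_or_pos i with h0 | h0
    · subst h0; rw [hc0]; exact hc1 1
    · have hci : c i = x (i-1) := by simp only [hcdef]; rw [if_neg (by omega), if_pos hi]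
      rcases lt_or_eq_of_le hi with h | h
      · rw [hceq i h, hci]
        exact hxmono i (le_of_lt h) (i-1) (by omega)
      · subst h; rw [hclast, hci]
        exact le_of_lt (hprev _ (by omega))
  have hcmono : ∀ i j, i ≤ j → j ≤ n + 1 → c i ≤ c j := by
    intro i j hij
    induction j with
    | zero =>
      intro _
      have h0 : i = 0 := by omega
      rw [h0]
    | succ k ih =>
      intro hk
      rcases Nat.lt_succ_iff_lt_or_eq.mp (Nat.lt_succ_of_le hij) with h | h
      · exact le_trans (ih (by omega) (by omega)) (hcmono1 k (by omega))
      · rw [h]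
  have hclex : ∀ i, i ≤ n → c (i+1) ≤ x i := by
    intro i hi
    rcases lt_or_eq_of_le hi with h | h
    · rw [hceq i h]
    · subst h; rw [hclast]; exact hxn
  have hcnR : c n < R := by
    rcases Nat.eq_zero_or_pos n with h0 | h0
    · rw [h0, hc0]; exact hR1
    · have hcn : c n = x (n-1) := by simp only [hcdef]; rw [if_neg (by omega), if_pos (le_refl n)]
      rw [hcn]; exact hprev _ (by omega)
  -- cost is S i on each piece
  have hcost_eq : ∀ i, i ≤ n → ∀ t : ℝ, c i < t → t ≤ c (i+1) → cost x t = S i := by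
    intro i hi t hlo thi
    have hidx : costIdx x t = i := by
      apply costIdx_eq_s8
      · intro j hj
        have hxj : x j = c (j+1) := (hceq j (by omega)).symm
        rw [hxj]
        exact lt_of_le_of_lt (hcmono (j+1) i (by omega) (by omega)) hlo
      · exact le_trans thi (hclex i hi)
    unfold cost
    rw [hidx]
  have hcostR : cost x R = S n := hcost_eq n (le_refl n) R hcnR (le_of_eq hclast.symm)
  -- the simple function g
  set g : ℝ → ℝ := fun t => ∑ i ∈ Finset.range (n+1),
      (Set.Ioc (c i) (c (i+1))).indicator (fun s => S i / s) t with hgdef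
  have hfind : ∀ t : ℝ, t ∈ Set.Ioc (1:ℝ) R → ∃ i, i ≤ n ∧ c i < t ∧ t ≤ c (i+1) := by
    intro t ht
    classical
    refine ⟨Nat.findGreatest (fun k => c k < t) n, Nat.findGreatest_le n, ?_, ?_⟩
    · exact Nat.findGreatest_spec (P := fun k => c k < t) (Nat.zero_le n)
        (show c 0 < t by rw [hc0]; exact ht.1)
    · rcases lt_or_eq_of_le (Nat.findGreatest_le n : Nat.findGreatest (fun k => c k < t) n ≤ n)
        with h | h
      · have := Nat.findGreatest_is_greatest
          (Nat.lt_succ_of_le (le_refl (Nat.findGreatest (fun k => c k < t) n))) (by omega)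
        exact not_lt.1 this
      · rw [h, hclast]; exact ht.2
  have hpiece_subset : ∀ i, i ≤ n → Set.Ioc (c i) (c (i+1)) ⊆ Set.Ioc (1:ℝ) R := by
    intro i hi t ht
    constructor
    · exact lt_of_le_of_lt (hc1 i) ht.1
    · exact le_trans ht.2 (by rw [← hclast]; exact hcmono (i+1) (n+1) (by omega) (le_refl _))
  have hg_val : ∀ t : ℝ, t ∈ Set.Ioc (1:ℝ) R →
      ∃ i, i ≤ n ∧ c i < t ∧ t ≤ c (i+1) ∧ g t = S i / t := by
    intro t ht
    obtain ⟨i, hi, hlo, hhi⟩ := hfind t ht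
    refine ⟨i, hi, hlo, hhi, ?_⟩
    simp only [hgdef]
    rw [Finset.sum_eq_single_of_mem i (Finset.mem_range.2 (by omega))]
    · exact Set.indicator_of_mem (Set.mem_Ioc.mpr ⟨hlo, hhi⟩) _
    · intro k hk hki
      apply Set.indicator_of_notMem
      intro hmem
      rcases lt_or_gt_of_ne hki with h | h
      · exact absurd hmem.2 (not_le.2 (lt_of_le_of_lt (hcmono (k+1) i (by omega) (by omega)) hlo))
      · exact absurd hmem.1
          (not_lt.2 (le_trans hhi (hcmono (i+1) k (by omega) (by
            simp only [Finset.mem_range] at hk; omega))))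
  have hg_eq : ∀ t ∈ Set.Ioc (1:ℝ) R, cost x t / t = g t := by
    intro t ht
    obtain ⟨i, hi, hlo, hhi, hgt⟩ := hg_val t ht
    rw [hgt, hcost_eq i hi t hlo hhi]
  -- measurability and integrability of g
  have hgmeas : Measurable g := by
    apply Finset.measurable_sum
    intro i _
    exact (measurable_const.div measurable_id).indicator measurableSet_Ioc
  have hpieceInt : ∀ i, i ≤ n →
      IntegrableOn (fun s => S i / s) (Set.Ioc (c i) (c (i+1))) volume := by
    intro i hi
    apply IntegrableOn.mono_set _ Set.Ioc_subset_Icc_self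
    apply ContinuousOn.integrableOn_Icc
    apply ContinuousOn.div continuousOn_const continuousOn_id
    intro t ht
    exact ne_of_gt (lt_of_lt_of_le zero_lt_one (le_trans (hc1 i) ht.1))
  -- rewrite the measure with Ioc
  have hDeps : Deps ε R = ((volume.restrict (Set.Ioc (1:ℝ) R)).withDensity
      fun t => ENNReal.ofReal (ε / t)) + (ENNReal.ofReal ε) • Measure.dirac R := by
    unfold Deps
    rw [Measure.restrict_congr_set Ico_ae_eq_Ioc]
  set μ : Measure ℝ := volume.restrict (Set.Ioc (1:ℝ) R) with hμdef
  set wd : Measure ℝ := μ.withDensity (fun t => ENNReal.ofReal (ε / t)) with hwddef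
  set f : ℝ → ℝ := fun u => cost x u / u with hfdef
  have hfg_ae : f =ᵐ[μ] g := by
    rw [hμdef, Filter.EventuallyEq, ae_restrict_iff' measurableSet_Ioc]
    exact ae_of_all _ hg_eq
  have hfg_wd : f =ᵐ[wd] g :=
    (withDensity_absolutelyContinuous μ _).ae_eq hfg_ae
  have hdens : (fun t : ℝ => ENNReal.ofReal (ε / t)) = fun t : ℝ => ((ε / t).toNNReal : ℝ≥0∞) :=
    rfl
  have hdmeas : Measurable fun t : ℝ => (ε / t).toNNReal :=
    (measurable_const.div measurable_id).real_toNNReal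
  have hsmul_eq : (fun t : ℝ => (ε / t).toNNReal • g t) = fun t : ℝ => max (ε / t) 0 * g t := by
    funext t
    rw [NNReal.smul_def, smul_eq_mul, Real.coe_toNNReal']
  have hg_bd : ∀ t ∈ Set.Ioc (1:ℝ) R, ‖max (ε / t) 0 * g t‖ ≤ ε * S n := by
    intro t ht
    obtain ⟨i, hi, hlo, hhi, hgt⟩ := hg_val t ht
    have ht1 : (1:ℝ) < t := ht.1
    have hSi := hSpos i hi
    have h1 : max (ε / t) 0 ≤ ε := max_le (div_le_self hε0.le ht1.le) hε0.le
    have h2 : S i / t ≤ S n := le_trans (div_le_self hSi.le ht1.le) (hSle i hi)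
    rw [hgt, Real.norm_eq_abs, abs_of_nonneg (by positivity)]
    exact mul_le_mul h1 h2 (by positivity) hε0.le
  have hh_int : Integrable (fun t : ℝ => (ε / t).toNNReal • g t) μ := by
    rw [hsmul_eq, hμdef]
    apply Measure.integrableOn_of_bounded (M := ε * S n)
    · exact ne_of_lt measure_Ioc_lt_top
    · exact (((measurable_const.div measurable_id).max measurable_const).mul
        hgmeas).aestronglyMeasurable
    · rw [ae_restrict_iff' measurableSet_Ioc]
      exact ae_of_all _ hg_bd
  have hg_int_wd : Integrable g wd := by
    rw [hwddef, hdens]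
    exact (integrable_withDensity_iff_integrable_smul hdmeas).2 hh_int
  have hf_int_wd : Integrable f wd := hg_int_wd.congr hfg_wd.symm
  have hf_int_dirac : Integrable f ((ENNReal.ofReal ε) • Measure.dirac R) := by
    refine Integrable.smul_measure ?_ ENNReal.ofReal_ne_top
    have hae : f =ᵐ[Measure.dirac R] fun _ => f R := by
      rw [Filter.EventuallyEq, ae_dirac_eq]
      exact Filter.eventually_pure.2 rfl
    exact (integrable_const (f R)).congr hae.symm
  have hfR : f R = S n / R := by rw [hfdef]; simp only; rw [hcostR]
  -- value of the withDensity integral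
  have hwd_val : ∫ u, f u ∂wd
      = ∑ i ∈ Finset.range (n+1), ε * S i * ((c i)⁻¹ - (c (i+1))⁻¹) := by
    rw [integral_congr_ae hfg_wd, hwddef, hdens, integral_withDensity_eq_integral_smul hdmeas g,
      hsmul_eq, hμdef]
    have hrw : Set.EqOn (fun t : ℝ => max (ε / t) 0 * g t)
        (fun t : ℝ => ∑ i ∈ Finset.range (n+1),
          (Set.Ioc (c i) (c (i+1))).indicator (fun s => ε * S i / s^2) t)
        (Set.Ioc (1:ℝ) R) := by
      intro t ht
      have ht0 : (0:ℝ) < t := lt_trans zero_lt_one ht.1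
      simp only
      rw [max_eq_left (by positivity : (0:ℝ) ≤ ε / t), hgdef]
      simp only
      rw [Finset.mul_sum]
      apply Finset.sum_congr rfl
      intro i _
      by_cases hmem : t ∈ Set.Ioc (c i) (c (i+1))
      · rw [Set.indicator_of_mem hmem, Set.indicator_of_mem hmem]
        ring
      · rw [Set.indicator_of_notMem hmem, Set.indicator_of_notMem hmem, mul_zero]
    rw [setIntegral_congr_fun measurableSet_Ioc hrw]
    rw [integral_finset_sum _ (fun i hi => ?_)]
    · apply Finset.sum_congr rfl
      intro i hi
      have hi' : i ≤ n := by simp only [Finset.mem_range] at hi; omega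
      rw [integral_indicator measurableSet_Ioc, Measure.restrict_restrict measurableSet_Ioc,
        Set.inter_eq_self_of_subset_left (hpiece_subset i hi'),
        ← intervalIntegral.integral_of_le (hcmono1 i hi')]
      have h0 : (0:ℝ) ∉ Set.uIcc (c i) (c (i+1)) := by
        rw [Set.uIcc_of_le (hcmono1 i hi')]
        intro hmem
        exact absurd hmem.1 (not_le.2 (lt_of_lt_of_le zero_lt_one (hc1 i)))
      have hcongr : ∫ t in (c i)..(c (i+1)), ε * S i / t^2
          = ε * S i * ∫ t in (c i)..(c (i+1)), (t:ℝ)^(-2:ℤ) := by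
        rw [← intervalIntegral.integral_const_mul]
        apply intervalIntegral.integral_congr
        intro t htm
        simp only
        rw [zpow_neg, show ((2:ℤ)) = ((2:ℕ):ℤ) from rfl, zpow_natCast]
        ring
      rw [hcongr, integral_zpow (Or.inr ⟨by decide, h0⟩)]
      have hci0 : (0:ℝ) < c i := lt_of_lt_of_le zero_lt_one (hc1 i)
      have hci10 : (0:ℝ) < c (i+1) := lt_of_lt_of_le zero_lt_one (hc1 (i+1))
      have he1 : (c (i+1)) ^ ((-2:ℤ) + 1) = (c (i+1))⁻¹ := by norm_num
      have he2 : (c i) ^ ((-2:ℤ) + 1) = (c i)⁻¹ := by norm_num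
      rw [he1, he2]
      push_cast
      ring
    · -- integrability of each indicator summand
      have hi' : i ≤ n := by simp only [Finset.mem_range] at hi; omega
      apply Integrable.restrict
      apply IntegrableOn.integrable_indicator _ measurableSet_Ioc
      apply IntegrableOn.mono_set _ Set.Ioc_subset_Icc_self
      apply ContinuousOn.integrableOn_Icc
      apply ContinuousOn.div continuousOn_const
      · exact (continuousOn_id.pow 2)
      · intro t ht
        have : (1:ℝ) ≤ t := le_trans (hc1 i) ht.1
        positivity
  -- total value of the integral
  have habel : (∑ i ∈ Finset.range (n+1), S i * ((c i)⁻¹ - (c (i+1))⁻¹))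
      + S n * (c (n+1))⁻¹ = ∑ j ∈ Finset.range (n+1), x j * (c j)⁻¹ :=
    abel_id x (fun j => (c j)⁻¹) n
  have htotal : ∫ u, f u ∂(Deps ε R) = ε * ∑ j ∈ Finset.range (n+1), x j * (c j)⁻¹ := by
    rw [hDeps, integral_add_measure hf_int_wd hf_int_dirac, integral_smul_measure, integral_dirac,
      ENNReal.toReal_ofReal hε0.le, hwd_val, hfR, ← habel, hclast]
    rw [mul_add, Finset.mul_sum, smul_eq_mul, div_eq_mul_inv]
    congr 1
    exact Finset.sum_congr rfl fun i _ => by ring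
  -- final inequality
  have hcne : ∀ j, c j ≠ 0 := fun j => ne_of_gt (lt_of_lt_of_le zero_lt_one (hc1 j))
  have hxne : ∀ j, j ≤ n → x j ≠ 0 :=
    fun j hj => ne_of_gt (lt_of_lt_of_le zero_lt_one (hx1 j hj))
  have hlogsum : ∑ j ∈ Finset.range (n+1), Real.log (x j / c j) = Real.log (x n) := by
    have hstep : ∀ j ∈ Finset.range (n+1),
        Real.log (x j / c j) = Real.log (x j) - Real.log (c j) := by
      intro j hj
      simp only [Finset.mem_range] at hj
      exact Real.log_div (hxne j (by omega)) (hcne j)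
    rw [Finset.sum_congr rfl hstep, Finset.sum_sub_distrib]
    have h2 : ∑ j ∈ Finset.range (n+1), Real.log (c j)
        = ∑ i ∈ Finset.range n, Real.log (x i) := by
      rw [Finset.sum_range_succ']
      have hz : Real.log (c 0) = 0 := by rw [hc0, Real.log_one]
      rw [hz, add_zero]
      apply Finset.sum_congr rfl
      intro i hi
      simp only [Finset.mem_range] at hi
      rw [hceq i hi]
    rw [h2, Finset.sum_range_succ]
    ring
  have hterm : ∀ j, j ≤ n → Real.exp 1 * Real.log (x j / c j) ≤ x j * (c j)⁻¹ := by
    intro j hj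
    rw [← div_eq_mul_inv]
    apply elog_le
    have := hx1 j hj
    have := hc1 j
    positivity
  have hlogR : L ≤ Real.log (x n) := by
    calc L = Real.log R := by rw [hR]; rw [Real.log_exp]
    _ ≤ Real.log (x n) := Real.log_le_log (by linarith) hxn
  calc (1 - ε) * Real.exp 1 = ε * (Real.exp 1 * L) := by
        rw [hLdef]; field_simp
  _ ≤ ε * (Real.exp 1 * Real.log (x n)) := by
        apply mul_le_mul_of_nonneg_left _ hε0.le
        exact mul_le_mul_of_nonneg_left hlogR (Real.exp_pos 1).le
  _ = ε * (Real.exp 1 * ∑ j ∈ Finset.range (n+1), Real.log (x j / c j)) := by rw [hlogsum]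
  _ ≤ ε * ∑ j ∈ Finset.range (n+1), x j * (c j)⁻¹ := by
        apply mul_le_mul_of_nonneg_left _ hε0.le
        rw [Finset.mul_sum]
        apply Finset.sum_le_sum
        intro j hj
        simp only [Finset.mem_range] at hj
        exact hterm j (by omega)
  _ = ∫ u, f u ∂(Deps ε R) := htotal.symm
end

section
/- Let ε ∈ (0,1), R = exp((1−ε)/ε), and let D_ε be the probability measure on [1,R] with density t ↦ ε/t on [1,R) together with an atom of mass ε at R. Let n ∈ ℕ and let 1 ≤ x_0 < x_1 < ⋯ < x_n be reals with x_{n−1} < R ≤ x_n, and set x_{−1} = 1. Then ∫ cost(X,u)/u dD_ε(u) = ε · Σ_{i=0}^{n} x_i/x_{i−1}, where X = (x_i)_{i=0}^{n}. -/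
open MeasureTheory

lemma costIdx_eq_of (X : ℕ → ℝ) (u : ℝ) (i : ℕ) (h1 : u ≤ X i)
    (h2 : ∀ j, j < i → X j < u) : costIdx X u = i := by
  have hi : i ∈ {j : ℕ | u ≤ X j} := h1
  refine le_antisymm (Nat.sInf_le hi) ?_
  by_contra hlt
  push_neg at hlt
  have hmem := Nat.sInf_mem (⟨i, hi⟩ : {j : ℕ | u ≤ X j}.Nonempty)
  exact absurd hmem (not_le.2 (h2 _ hlt))

lemma abel_sum (x q : ℕ → ℝ) :
    ∀ n : ℕ, ∑ i ∈ Finset.range n,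
        (∑ j ∈ Finset.range (i+1), x j) * ((q i)⁻¹ - (q (i+1))⁻¹)
      + (∑ j ∈ Finset.range (n+1), x j) * (q n)⁻¹
      = ∑ i ∈ Finset.range (n+1), x i * (q i)⁻¹
  | 0 => by simp
  | (n+1) => by
    have ih := abel_sum x q n
    rw [Finset.sum_range_succ
        (fun i => (∑ j ∈ Finset.range (i+1), x j) * ((q i)⁻¹ - (q (i+1))⁻¹)) n,
      Finset.sum_range_succ (fun i => x i * (q i)⁻¹) (n+1),
      Finset.sum_range_succ x (n+1)]
    linear_combination ih

theorem stmt9 (ε : ℝ) (hε : ε ∈ Set.Ioo (0:ℝ) 1) (R : ℝ)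
    (hR : R = Real.exp ((1 - ε) / ε))
    (n : ℕ) (x : ℕ → ℝ) (hx0 : 1 ≤ x 0) (hmono : ∀ i, i < n → x i < x (i + 1))
    (hxn : R ≤ x n) (hprev : ∀ i, i < n → x i < R) :
    ∫ u, cost x u / u ∂(Deps ε R) =
      ε * ∑ i ∈ Finset.range (n + 1), x i / (if i = 0 then 1 else x (i - 1)) := by
  obtain ⟨hε0, hε1⟩ := hε
  have hR1 : (1:ℝ) < R := by
    rw [hR]
    calc (1:ℝ) = Real.exp 0 := by simp
    _ < Real.exp ((1-ε)/ε) := Real.exp_lt_exp.2 (div_pos (by linarith) hε0)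
  -- monotonicity of x up to index n
  have xmono : ∀ k, k ≤ n → ∀ j, j ≤ k → x j ≤ x k := by
    intro k
    induction k with
    | zero => intro _ j hj; have : j = 0 := Nat.le_zero.mp hj; simp [this]
    | succ k ih =>
      intro hk j hj
      rcases Nat.lt_or_ge j (k+1) with h | h
      · exact (ih (by omega) j (by omega)).trans (le_of_lt (hmono k (by omega)))
      · have : j = k+1 := by omega
        simp [this]
  have hx1 : ∀ i, i ≤ n → 1 ≤ x i := fun i hi => hx0.trans (xmono i hi 0 (Nat.zero_le _))
  set q : ℕ → ℝ := fun i => if i = 0 then 1 else x (i-1) with hq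
  set p : ℕ → ℝ := fun i => if i = n+1 then R else q i with hp
  set S : ℕ → ℝ := fun i => ∑ j ∈ Finset.range (i+1), x j with hS
  have hq1 : ∀ i, i ≤ n → 1 ≤ q i := by
    intro i hi
    by_cases h0 : i = 0
    · simp [hq, h0]
    · simp only [hq, if_neg h0]
      exact hx1 _ (by omega)
  have hpq : ∀ i, i ≤ n → p i = q i := by
    intro i hi; simp only [hp, if_neg (by omega : ¬ i = n+1)]
  have hpn1 : p (n+1) = R := by simp [hp]
  have hp_one : ∀ i, i ≤ n+1 → 1 ≤ p i := by
    intro i hi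
    by_cases h : i = n+1
    · rw [h, hpn1]; exact hR1.le
    · rw [hpq i (by omega)]; exact hq1 i (by omega)
  have hpltR : ∀ i, i ≤ n → p i < R := by
    intro i hi
    rw [hpq i hi]
    by_cases h0 : i = 0
    · simpa [hq, h0] using hR1
    · simp only [hq, if_neg h0]
      exact hprev _ (by omega)
  have hpleR : ∀ i, i ≤ n+1 → p i ≤ R := by
    intro i hi
    by_cases h : i = n+1
    · rw [h, hpn1]
    · exact (hpltR i (by omega)).le
  have hpmono_adj : ∀ i, i ≤ n → p i ≤ p (i+1) := by
    intro i hi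
    by_cases h : i = n
    · rw [h, hpn1]; exact (hpltR n le_rfl).le
    · rw [hpq i hi, hpq (i+1) (by omega)]
      by_cases h0 : i = 0
      · simp only [hq, h0]; simpa using hx0
      · simp only [hq, if_neg h0, if_neg (by omega : ¬ i + 1 = 0)]
        simpa using (xmono (i+1-1) (by omega) (i-1) (by omega))
  have hpmono : ∀ j k, j ≤ k → k ≤ n+1 → p j ≤ p k := by
    intro j k hjk hk
    induction k with
    | zero =>
      have h0 : j = 0 := by omega
      simp [h0]
    | succ k ih =>
      rcases Nat.lt_or_ge j (k+1) with h | h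
      · exact (ih (by omega) (by omega)).trans (hpmono_adj k (by omega))
      · have : j = k+1 := by omega
        simp [this]
  -- cost on the pieces
  have hcost : ∀ i, i ≤ n → ∀ u, u ∈ Set.Ioc (p i) (p (i+1)) → cost x u = S i := by
    intro i hi u hu
    have hidx : costIdx x u = i := by
      apply costIdx_eq_of
      · -- u ≤ x i
        rcases Nat.lt_or_ge i n with h | h
        · have hpi1 : p (i+1) = x i := by
            rw [hpq (i+1) (by omega)]
            simp [hq]
          rw [← hpi1]; exact hu.2
        · have hin : i = n := le_antisymm hi h
          subst hin
          calc u ≤ R := by rw [← hpn1]; exact hu.2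
          _ ≤ x i := hxn
      · intro j hj
        have hxji : x j ≤ x (i-1) := xmono (i-1) (by omega) j (by omega)
        have hpi : p i = x (i-1) := by
          rw [hpq i hi]; simp only [hq, if_neg (by omega : ¬ i = 0)]
        calc x j ≤ x (i-1) := hxji
        _ = p i := hpi.symm
        _ < u := hu.1
    rw [cost, hidx, hS]
  have hcostR : cost x R = S n :=
    hcost n le_rfl R ⟨hpltR n le_rfl, by rw [← hpn1]⟩
  -- the step function
  set g : ℝ → ℝ := fun u => ∑ i ∈ Finset.range (n+1),
      Set.indicator (Set.Ioc (p i) (p (i+1))) (fun v => ε * S i / v^2) u with hg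
  have hfg : ∀ u ∈ Set.Ioc (1:ℝ) R, (ε / u) * (cost x u / u) = g u := by
    intro u hu
    classical
    set i := Nat.findGreatest (fun j => p j < u) n with hi
    have hile : i ≤ n := Nat.findGreatest_le n
    have hp0 : p 0 < u := by
      have : p 0 = 1 := by rw [hpq 0 (Nat.zero_le _)]; simp [hq]
      rw [this]; exact hu.1
    have hpi_lt : p i < u := Nat.findGreatest_spec (P := fun j => p j < u) (Nat.zero_le n) hp0
    have hu_le : u ≤ p (i+1) := by
      rcases Nat.lt_or_ge i n with h | h
      · by_contra hcon
        push_neg at hcon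
        exact Nat.findGreatest_is_greatest (P := fun j => p j < u) (Nat.lt_succ_self i) (by omega) hcon
      · have : i = n := le_antisymm hile h
        rw [this, hpn1]; exact hu.2
    have humem : u ∈ Set.Ioc (p i) (p (i+1)) := ⟨hpi_lt, hu_le⟩
    have hgu : g u = ε * S i / u^2 := by
      simp only [hg]
      rw [Finset.sum_eq_single_of_mem i (Finset.mem_range.2 (by omega))]
      · rw [Set.indicator_of_mem humem]
      · intro j hj hne
        have hjn : j ≤ n := Nat.lt_succ_iff.1 (Finset.mem_range.1 hj)
        apply Set.indicator_of_notMem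
        intro hmem'
        rcases lt_or_gt_of_ne hne with hlt | hgt
        · -- j < i : u ≤ p (j+1) ≤ p i < u
          have : p (j+1) ≤ p i := hpmono (j+1) i (by omega) (by omega)
          linarith [hmem'.2]
        · -- i < j : u ≤ p (i+1) ≤ p j < u
          have : p (i+1) ≤ p j := hpmono (i+1) j (by omega) (by omega)
          linarith [hmem'.1]
    rw [hgu, hcost i hile u humem]
    have hune : u ≠ 0 := by intro h; rw [h] at hu; linarith [hu.1]
    rw [div_mul_div_comm, pow_two]
  -- integrability of the pieces
  have hpiece_int : ∀ i, i ≤ n →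
      IntegrableOn (fun v => ε * S i / v^2) (Set.Ioc (p i) (p (i+1))) volume := by
    intro i hi
    have hcont : ContinuousOn (fun v => ε * S i / v^2) (Set.Icc (p i) (p (i+1))) := by
      apply ContinuousOn.div continuousOn_const (by fun_prop)
      intro v hv
      have h1v : (1:ℝ) ≤ v := (hp_one i (by omega)).trans hv.1
      positivity
    exact (hcont.integrableOn_Icc).mono_set Set.Ioc_subset_Icc_self
  have hg_int : Integrable g volume := by
    rw [hg]
    apply integrable_finset_sum
    intro i hi
    exact (hpiece_int i (Nat.lt_succ_iff.1 (Finset.mem_range.1 hi))).integrable_indicator measurableSet_Ioc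

  -- measurability of the density
  have hmeas_nn : Measurable (fun t : ℝ => (ε / t).toNNReal) :=
    (measurable_const.div measurable_id).real_toNNReal
  have hrestrict : volume.restrict (Set.Ico (1:ℝ) R) = volume.restrict (Set.Ioc (1:ℝ) R) :=
    Measure.restrict_congr_set Ico_ae_eq_Ioc
  have hDeps : Deps ε R =
      ((volume.restrict (Set.Ioc (1:ℝ) R)).withDensity fun t => ((ε / t).toNNReal : ENNReal))
        + (ENNReal.ofReal ε) • Measure.dirac R := by
    rw [Deps, hrestrict]; rfl
  have hsmul_eq : Set.EqOn (fun u : ℝ => (ε/u).toNNReal • (cost x u / u)) g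
      (Set.Ioc (1:ℝ) R) := by
    intro u hu
    have h0 : 0 ≤ ε / u := div_nonneg hε0.le (by linarith [hu.1])
    show (ε/u).toNNReal • (cost x u / u) = g u
    rw [NNReal.smul_def, Real.coe_toNNReal _ h0, smul_eq_mul]
    exact hfg u hu
  have hInt1 : Integrable (fun u => cost x u / u)
      ((volume.restrict (Set.Ioc (1:ℝ) R)).withDensity fun t => ((ε / t).toNNReal : ENNReal)) := by
    rw [integrable_withDensity_iff_integrable_smul hmeas_nn]
    have hae : (fun u : ℝ => (ε/u).toNNReal • (cost x u / u))
        =ᵐ[volume.restrict (Set.Ioc (1:ℝ) R)] g := by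
      filter_upwards [ae_restrict_mem measurableSet_Ioc] with u hu
      exact hsmul_eq hu
    exact (hg_int.integrableOn).congr hae.symm
  have hInt2 : Integrable (fun u => cost x u / u) ((ENNReal.ofReal ε) • Measure.dirac R) := by
    rw [integrable_smul_measure (by simp [hε0, ENNReal.ofReal_pos.2 hε0]) ENNReal.ofReal_ne_top]
    exact (integrable_const _).congr (ae_eq_dirac (fun u => cost x u / u)).symm
  have hdirac : ∫ u, cost x u / u ∂((ENNReal.ofReal ε) • Measure.dirac R) = ε * (S n / R) := by
    rw [integral_smul_measure, integral_dirac, ENNReal.toReal_ofReal hε0.le, hcostR,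
      smul_eq_mul]
  have hwd : ∫ u, cost x u / u
        ∂((volume.restrict (Set.Ioc (1:ℝ) R)).withDensity fun t => ((ε / t).toNNReal : ENNReal))
      = ∑ i ∈ Finset.range (n+1), ε * S i * ((p i)⁻¹ - (p (i+1))⁻¹) := by
    rw [integral_withDensity_eq_integral_smul hmeas_nn]
    rw [setIntegral_congr_fun measurableSet_Ioc hsmul_eq]
    rw [hg]
    rw [integral_finset_sum _ (fun i hi =>
      ((hpiece_int i (Nat.lt_succ_iff.1 (Finset.mem_range.1 hi))).integrable_indicator
        measurableSet_Ioc).restrict)]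
    refine Finset.sum_congr rfl ?_
    intro i hi
    have hile : i ≤ n := Nat.lt_succ_iff.1 (Finset.mem_range.1 hi)
    have hsub : Set.Ioc (p i) (p (i+1)) ⊆ Set.Ioc (1:ℝ) R :=
      Set.Ioc_subset_Ioc (hp_one i (by omega)) (hpleR (i+1) (by omega))
    rw [setIntegral_indicator measurableSet_Ioc, Set.inter_eq_self_of_subset_right hsub]
    have hab : p i ≤ p (i+1) := hpmono_adj i hile
    have hpi_pos : (0:ℝ) < p i := lt_of_lt_of_le one_pos (hp_one i (by omega))
    rw [← intervalIntegral.integral_of_le hab]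
    have hcongr : ∀ u ∈ Set.uIcc (p i) (p (i+1)), ε * S i / u^2 = (ε * S i) * u ^ ((-2):ℤ) := by
      intro u hu
      rw [Set.uIcc_of_le hab] at hu
      have hupos : (0:ℝ) < u := lt_of_lt_of_le hpi_pos hu.1
      rw [zpow_neg]
      rw [show ((2:ℤ)) = ((2:ℕ) : ℤ) from rfl, zpow_natCast]
      field_simp
    rw [intervalIntegral.integral_congr hcongr, intervalIntegral.integral_const_mul,
      integral_zpow (Or.inr ⟨by decide, by
        rw [Set.uIcc_of_le hab]
        intro hmem
        exact absurd hmem.1 (not_le.2 hpi_pos)⟩)]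
    have h1 : p i ≠ 0 := ne_of_gt hpi_pos
    have h2 : p (i+1) ≠ 0 := ne_of_gt (lt_of_lt_of_le hpi_pos hab)
    rw [show ((-2):ℤ) + 1 = -1 from rfl]
    rw [zpow_neg_one, zpow_neg_one]
    push_cast
    ring
  rw [hDeps, integral_add_measure hInt1 hInt2, hwd, hdirac]
  have hrhs : ∑ i ∈ Finset.range (n+1), x i / (if i = 0 then 1 else x (i-1))
      = ∑ i ∈ Finset.range (n+1), x i * (q i)⁻¹ := by
    refine Finset.sum_congr rfl fun i _ => ?_
    rw [div_eq_mul_inv, hq]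
  rw [hrhs]
  have key : (∑ i ∈ Finset.range n, S i * ((q i)⁻¹ - (q (i+1))⁻¹)) + S n * (q n)⁻¹
      = ∑ i ∈ Finset.range (n+1), x i * (q i)⁻¹ := by
    simpa only [hS] using abel_sum x q n
  have hsplit : ∑ i ∈ Finset.range (n+1), ε * S i * ((p i)⁻¹ - (p (i+1))⁻¹)
      = ε * ((∑ i ∈ Finset.range n, S i * ((q i)⁻¹ - (q (i+1))⁻¹))
          + S n * ((q n)⁻¹ - R⁻¹)) := by
    rw [Finset.sum_range_succ]
    have h1 : ∀ i ∈ Finset.range n, ε * S i * ((p i)⁻¹ - (p (i+1))⁻¹)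
        = ε * (S i * ((q i)⁻¹ - (q (i+1))⁻¹)) := by
      intro i hi
      have hin : i < n := Finset.mem_range.1 hi
      rw [hpq i (by omega), hpq (i+1) (by omega)]
      ring
    rw [Finset.sum_congr rfl h1, hpq n le_rfl, hpn1, ← Finset.mul_sum]
    ring
  rw [hsplit]
  have hRne : R ≠ 0 := by linarith
  linear_combination ε * key
end

section
/- Let ε ∈ (0,1) and R = exp((1−ε)/ε). For every n ∈ ℕ and all positive reals r_0, r_1, …, r_n with Π_{i=0}^{n} r_i ≥ R, it holds that ε · Σ_{i=0}^{n} r_i ≥ (1−ε) · R^{1/(n+1)} / ln(R^{1/(n+1)}) ≥ (1−ε)·e. -/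
theorem stmt10 (ε : ℝ) (hε : ε ∈ Set.Ioo (0:ℝ) 1) (R : ℝ)
    (hR : R = Real.exp ((1 - ε) / ε))
    (n : ℕ) (r : ℕ → ℝ) (hr : ∀ i, i ≤ n → 0 < r i)
    (hprod : R ≤ ∏ i ∈ Finset.range (n + 1), r i) :
    (1 - ε) * (R ^ (1 / ((n : ℝ) + 1)) / Real.log (R ^ (1 / ((n : ℝ) + 1)))) ≤
        ε * ∑ i ∈ Finset.range (n + 1), r i ∧
    (1 - ε) * Real.exp 1 ≤
      (1 - ε) * (R ^ (1 / ((n : ℝ) + 1)) / Real.log (R ^ (1 / ((n : ℝ) + 1)))) := by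
  obtain ⟨hε0, hε1⟩ := hε
  have hN : (0:ℝ) < (n:ℝ) + 1 := by positivity
  have h1ε : (0:ℝ) < 1 - ε := by linarith
  have hc : 0 < (1 - ε) / ε := div_pos h1ε hε0
  have hRpos : 0 < R := hR ▸ Real.exp_pos _
  have hlogR : Real.log R = (1 - ε) / ε := by rw [hR, Real.log_exp]
  set N : ℝ := (n : ℝ) + 1 with hNdef
  have hlogx : Real.log (R ^ (1 / N)) = ((1 - ε) / ε) / N := by
    rw [Real.log_rpow hRpos, hlogR]; ring
  have hxpos : 0 < R ^ (1 / N) := Real.rpow_pos_of_pos hRpos _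
  -- AM-GM
  have hamgm : ∏ i ∈ Finset.range (n + 1), (r i) ^ (1 / N) ≤
      ∑ i ∈ Finset.range (n + 1), (1 / N) * r i := by
    apply Real.geom_mean_le_arith_mean_weighted
    · intro i _; positivity
    · rw [Finset.sum_const, Finset.card_range, nsmul_eq_mul]
      push_cast; field_simp; exact hNdef.symm
    · intro i hi; exact (hr i (Nat.lt_succ_iff.mp (Finset.mem_range.mp hi))).le
  have hprodpow : R ^ (1 / N) ≤ ∏ i ∈ Finset.range (n + 1), (r i) ^ (1 / N) := by
    calc R ^ (1 / N) ≤ (∏ i ∈ Finset.range (n + 1), r i) ^ (1 / N) :=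
          Real.rpow_le_rpow hRpos.le hprod (by positivity)
      _ = ∏ i ∈ Finset.range (n + 1), (r i) ^ (1 / N) :=
          (Real.finset_prod_rpow _ _
            (fun i hi => (hr i (Nat.lt_succ_iff.mp (Finset.mem_range.mp hi))).le) _).symm
  have hsum : N * R ^ (1 / N) ≤ ∑ i ∈ Finset.range (n + 1), r i := by
    have h2 : ∑ i ∈ Finset.range (n + 1), (1 / N) * r i
        = (1 / N) * ∑ i ∈ Finset.range (n + 1), r i := by
      rw [Finset.mul_sum]
    have := hprodpow.trans hamgm
    rw [h2] at this
    rw [mul_comm]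
    calc R ^ (1 / N) * N ≤ ((1 / N) * ∑ i ∈ Finset.range (n + 1), r i) * N :=
          mul_le_mul_of_nonneg_right this hN.le
      _ = ∑ i ∈ Finset.range (n + 1), r i := by field_simp
  constructor
  · have key : (1 - ε) * (R ^ (1 / N) / Real.log (R ^ (1 / N)))
        = ε * (N * R ^ (1 / N)) := by
      rw [hlogx]; field_simp
    rw [key]
    exact mul_le_mul_of_nonneg_left hsum hε0.le
  · have ht : 0 < ((1 - ε) / ε) / N := by positivity
    set t : ℝ := ((1 - ε) / ε) / N
    have hx : R ^ (1 / N) = Real.exp t := by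
      rw [← Real.exp_log hxpos, hlogx]
    have hexp : Real.exp 1 * t ≤ Real.exp t := by
      have h1 : t ≤ Real.exp (t - 1) := by
        have := Real.add_one_le_exp (t - 1); linarith
      calc Real.exp 1 * t ≤ Real.exp 1 * Real.exp (t - 1) :=
            mul_le_mul_of_nonneg_left h1 (Real.exp_pos 1).le
        _ = Real.exp t := by rw [← Real.exp_add]; ring_nf
    apply mul_le_mul_of_nonneg_left _ h1ε.le
    rw [hlogx, hx]
    rw [le_div_iff₀ ht]
    exact hexp
end

section
/- Let ε ∈ (0,1), R = exp((1−ε)/ε), let n ≥ 1 be an integer, and let x_{−1} = 1 ≤ x_0 ≤ x_1 ≤ ⋯ ≤ x_n = R be positive reals. Set ρ_i = x_i/x_{i−1} for 0 ≤ i ≤ n and a = ρ_n. Then for every λ > 0, ε · Σ_{i=0}^{n} ρ_i + λ·(1 + 1/a) ≥ (1−ε)·(R/a)^{1/n} / ln(R^{1/n}) + ε·a + λ + λ/a. -/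
theorem stmt11 (ε : ℝ) (hε : ε ∈ Set.Ioo (0:ℝ) 1) (R : ℝ)
    (hR : R = Real.exp ((1 - ε) / ε))
    (n : ℕ) (hn : 1 ≤ n) (x : ℕ → ℝ) (hx0 : 1 ≤ x 0)
    (hmono : ∀ i, i < n → x i ≤ x (i + 1)) (hxn : x n = R) :
    ∀ lam : ℝ, 0 < lam →
      (1 - ε) * ((R / (x n / x (n - 1))) ^ (1 / (n : ℝ)) /
            Real.log (R ^ (1 / (n : ℝ))))
          + ε * (x n / x (n - 1)) + lam + lam / (x n / x (n - 1)) ≤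
        ε * (∑ i ∈ Finset.range (n + 1), x i / (if i = 0 then 1 else x (i - 1)))
          + lam * (1 + 1 / (x n / x (n - 1))) := by
  intro lam hlam
  obtain ⟨hε0, hε1⟩ := hε
  have hnR : (0:ℝ) < (n:ℝ) := by positivity
  -- all x i ≥ 1 for i ≤ n
  have hone : ∀ i, i ≤ n → 1 ≤ x i := by
    intro i hi
    induction i with
    | zero => exact hx0
    | succ k ih =>
        exact le_trans (ih (Nat.le_of_succ_le hi)) (hmono k (Nat.lt_of_succ_le hi))
  -- abbreviation
  set ρ : ℕ → ℝ := fun i => x i / (if i = 0 then 1 else x (i - 1)) with hρ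
  have hρpos : ∀ i, i ≤ n → 0 < ρ i := by
    intro i hi
    have h1 : (0:ℝ) < x i := lt_of_lt_of_le one_pos (hone i hi)
    rcases Nat.eq_zero_or_pos i with h | h
    · simp [hρ, h]; linarith
    · have : i ≠ 0 := Nat.pos_iff_ne_zero.mp h
      have h2 : (0:ℝ) < x (i - 1) := lt_of_lt_of_le one_pos (hone _ (le_trans (Nat.sub_le i 1) hi))
      simp only [hρ, if_neg this]
      positivity
  -- telescoping product
  have htel : ∀ m, m ≤ n → (∏ i ∈ Finset.range m, ρ i) =
      (if m = 0 then 1 else x (m - 1)) := by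
    intro m hm
    induction m with
    | zero => simp
    | succ k ih =>
        rw [Finset.prod_range_succ, ih (Nat.le_of_succ_le hm)]
        have hk1 : 1 ≤ x k := hone k (Nat.le_of_succ_le hm)
        rcases Nat.eq_zero_or_pos k with h | h
        · simp [hρ, h]
        · have hk0 : k ≠ 0 := Nat.pos_iff_ne_zero.mp h
          have hk1' : 1 ≤ x (k - 1) :=
            hone _ (le_trans (Nat.sub_le k 1) (Nat.le_of_succ_le hm))
          simp only [hρ, if_neg hk0, Nat.succ_ne_zero, if_false, Nat.succ_sub_one]
          field_simp
  have hxn1pos : (0:ℝ) < x (n - 1) :=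
    lt_of_lt_of_le one_pos (hone _ (Nat.sub_le n 1))
  have hxnpos : (0:ℝ) < x n := lt_of_lt_of_le one_pos (hone n le_rfl)
  -- AM-GM
  have hamgm : (∏ i ∈ Finset.range n, ρ i) ^ ((1:ℝ)/n) ≤
      (1/(n:ℝ)) * ∑ i ∈ Finset.range n, ρ i := by
    have h1 : ∏ i ∈ Finset.range n, ρ i ^ ((1:ℝ)/n) ≤
        ∑ i ∈ Finset.range n, (1/(n:ℝ)) * ρ i := by
      apply Real.geom_mean_le_arith_mean_weighted
      · intro i _; positivity
      · rw [Finset.sum_const, Finset.card_range, nsmul_eq_mul]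
        field_simp
      · intro i hi
        exact le_of_lt (hρpos i (le_of_lt (Finset.mem_range.mp hi)))
    rw [← Real.finset_prod_rpow _ _ (fun i hi =>
      le_of_lt (hρpos i (le_of_lt (Finset.mem_range.mp hi)))), ← Finset.mul_sum] at *
    exact h1
  have hprodeq : (∏ i ∈ Finset.range n, ρ i) = x (n - 1) := by
    rw [htel n le_rfl, if_neg (by omega)]
  -- R / a = x (n-1)
  have ha : R / (x n / x (n - 1)) = x (n - 1) := by
    have hRpos : 0 < R := by rw [hR]; exact Real.exp_pos _
    rw [hxn]; field_simp
  -- log value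
  have hlog : Real.log (R ^ (1 / (n : ℝ))) = (1/(n:ℝ)) * ((1 - ε)/ε) := by
    rw [hR, Real.log_rpow (Real.exp_pos _), Real.log_exp]
  -- key inequality
  have hkey : (1 - ε) * ((x (n-1)) ^ (1 / (n : ℝ)) / ((1/(n:ℝ)) * ((1 - ε)/ε)))
      ≤ ε * ∑ i ∈ Finset.range n, ρ i := by
    have h2 : (x (n-1)) ^ (1 / (n : ℝ)) ≤ (1/(n:ℝ)) * ∑ i ∈ Finset.range n, ρ i := by
      rw [← hprodeq]; exact hamgm
    have hL : (1 - ε) * ((x (n-1)) ^ (1 / (n : ℝ)) / ((1/(n:ℝ)) * ((1 - ε)/ε)))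
        = ε * (n:ℝ) * (x (n-1)) ^ (1 / (n : ℝ)) := by
      have h1ε : (1:ℝ) - ε ≠ 0 := ne_of_gt (by linarith)
      field_simp
    rw [hL]
    calc ε * (n:ℝ) * (x (n-1)) ^ (1 / (n : ℝ))
        ≤ ε * (n:ℝ) * ((1/(n:ℝ)) * ∑ i ∈ Finset.range n, ρ i) := by
          apply mul_le_mul_of_nonneg_left h2; positivity
      _ = ε * ∑ i ∈ Finset.range n, ρ i := by field_simp
  -- assemble
  have hsum : ∑ i ∈ Finset.range (n+1), ρ i
      = (∑ i ∈ Finset.range n, ρ i) + x n / x (n - 1) := by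
    rw [Finset.sum_range_succ]
    congr 1
    simp [hρ, Nat.pos_iff_ne_zero.mp hn]
  have hapos : 0 < x n / x (n - 1) := by positivity
  rw [ha, hlog, hsum, mul_add, mul_one_add]
  have : lam * (1 / (x n / x (n - 1))) = lam / (x n / x (n - 1)) := by
    rw [mul_one_div]
  rw [this]
  linarith [hkey]
end

section
/- Let R ≥ 1, Δ = 2R, and let μ be the probability distribution on positive reals with P(z = 1) = 1 − 1/Δ and P(z = Δ) = 1/Δ. Then for every λ > 0 and every ρ ≥ Δ², the geometric bidding strategy X = (λ·ρ^i)_{i≥0} satisfies E_{z∼μ}[cost(X,z)] ≥ Δ, and consequently cons(X,μ) ≥ R. -/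
theorem stmt12 (R : ℝ) (hR : 1 ≤ R) (lam ρ : ℝ) (hlam : 0 < lam)
    (hρ : (2 * R) ^ 2 ≤ ρ) :
    2 * R ≤ (1 - 1 / (2 * R)) * cost (fun i : ℕ => lam * ρ ^ i) 1
              + (1 / (2 * R)) * cost (fun i : ℕ => lam * ρ ^ i) (2 * R) ∧
    R ≤ ((1 - 1 / (2 * R)) * cost (fun i : ℕ => lam * ρ ^ i) 1
              + (1 / (2 * R)) * cost (fun i : ℕ => lam * ρ ^ i) (2 * R)) /
          ((1 - 1 / (2 * R)) * 1 + (1 / (2 * R)) * (2 * R)) := by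
  set Δ := 2 * R with hΔdef
  have hΔ : 2 ≤ Δ := by simp [hΔdef]; linarith
  have hΔ0 : (0:ℝ) < Δ := by linarith
  have hρ1 : 1 < ρ := by nlinarith
  have hρ0 : (0:ℝ) < ρ := by linarith
  set X : ℕ → ℝ := fun i => lam * ρ ^ i with hX
  have hXpos : ∀ i, 0 < X i := fun i => mul_pos hlam (pow_pos hρ0 i)
  have hne : ∀ u : ℝ, {i : ℕ | u ≤ X i}.Nonempty := by
    intro u
    obtain ⟨n, hn⟩ := pow_unbounded_of_one_lt (u / lam) hρ1
    refine ⟨n, ?_⟩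
    have : u / lam ≤ ρ ^ n := le_of_lt hn
    rw [div_le_iff₀ hlam] at this
    simpa [hX, mul_comm] using this
  have hmem : ∀ u : ℝ, u ≤ X (costIdx X u) := fun u => Nat.sInf_mem (hne u)
  have hcost_ge : ∀ u : ℝ, X (costIdx X u) ≤ cost X u := by
    intro u
    apply Finset.single_le_sum (f := X) (fun i _ => (hXpos i).le)
    simp
  have hcost_nonneg : ∀ u : ℝ, 0 ≤ cost X u :=
    fun u => Finset.sum_nonneg fun i _ => (hXpos i).le
  have hmono : ∀ i j : ℕ, i ≤ j → X i ≤ X j := by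
    intro i j hij
    exact mul_le_mul_of_nonneg_left (pow_le_pow_right₀ hρ1.le hij) hlam.le
  set i1 := costIdx X 1 with hi1
  set i2 := costIdx X Δ with hi2
  have h1 : 1 ≤ X i1 := hmem 1
  have h2 : Δ ≤ X i2 := hmem Δ
  have hinv : 1 / Δ * Δ = 1 := by field_simp
  have hinvpos : 0 < 1 / Δ := by positivity
  have hinvle : 1 / Δ ≤ 1 := by
    rw [div_le_one hΔ0]; linarith
  have key : Δ ≤ (1 - 1 / Δ) * cost X 1 + (1 / Δ) * cost X Δ := by
    by_cases h : Δ ≤ X i1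
    · -- i1 = i2
      have hle21 : i2 ≤ i1 := Nat.sInf_le h
      have hle12 : i1 ≤ i2 := Nat.sInf_le (by exact le_trans (by linarith) h2)
      have heq : i1 = i2 := le_antisymm hle12 hle21
      have hceq : cost X 1 = cost X Δ := by
        unfold cost
        rw [← hi1, ← hi2, heq]
      have hc1 : Δ ≤ cost X 1 := le_trans h (hcost_ge 1)
      rw [← hceq]
      nlinarith [hcost_nonneg 1]
    · push_neg at h
      have hlt : i1 < i2 := by
        by_contra hc
        push_neg at hc
        exact absurd (le_trans h2 (hmono i2 i1 hc)) (not_le.mpr h)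
      have hX2 : Δ ^ 2 ≤ X i2 := by
        have hs : i1 + 1 ≤ i2 := hlt
        have : X (i1 + 1) ≤ X i2 := hmono _ _ hs
        have hX1p : X (i1 + 1) = ρ * X i1 := by
          simp [hX, pow_succ]; ring
        nlinarith [hXpos i1]
      have hc2 : Δ ^ 2 ≤ cost X Δ := le_trans hX2 (hcost_ge Δ)
      nlinarith [hcost_nonneg 1, hcost_nonneg Δ]
  refine ⟨key, ?_⟩
  have hD : 0 < (1 - 1 / Δ) * 1 + (1 / Δ) * Δ := by nlinarith
  rw [le_div_iff₀ hD]
  nlinarith [key]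
end

section
/- Let R ≥ 1, Δ = 2R, and let μ be the probability distribution on positive reals with P(z = 1) = 1 − 1/Δ and P(z = Δ) = 1/Δ. Then for every r ≥ Δ², there exists an r-robust bidding strategy X with cons(X,μ) ≤ 1 + 1/R. -/
theorem stmt13 (R : ℝ) (hR : 1 ≤ R) (r : ℝ) (hr : (2 * R) ^ 2 ≤ r) :
    ∃ X : ℕ → ℝ, IsBiddingStrategy X ∧ IsRobust r X ∧
      ((1 - 1 / (2 * R)) * cost X 1 + (1 / (2 * R)) * cost X (2 * R)) /
          ((1 - 1 / (2 * R)) * 1 + (1 / (2 * R)) * (2 * R)) ≤ 1 + 1 / R := by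
  set D : ℝ := 2 * R with hD
  have hD2 : (2 : ℝ) ≤ D := by simp [hD]; linarith
  have hD1 : (1 : ℝ) < D := by linarith
  have hDpos : (0 : ℝ) < D := by linarith
  refine ⟨fun i => D ^ i, ⟨?_, ?_, ?_⟩, ⟨?_, ?_⟩, ?_⟩
  · exact fun i j h => pow_lt_pow_right₀ hD1 h
  · intro i; positivity
  · exact tendsto_pow_atTop_atTop_of_one_lt hD1
  · simp only [pow_zero]
    nlinarith
  · intro i
    have hgeom : ∑ j ∈ Finset.range (i + 1), D ^ j = (D ^ (i + 1) - 1) / (D - 1) :=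
      geom_sum_eq (by linarith) (i + 1)
    rw [hgeom]
    have hpow : (0:ℝ) < D ^ i := by positivity
    have hsum : (D ^ (i + 1) - 1) / (D - 1) ≤ D ^ (i + 1) - 1 := by
      rw [div_le_iff₀ (by linarith)]
      have h1 : (1:ℝ) ≤ D ^ (i+1) := one_le_pow₀ (by linarith)
      nlinarith
    have hr' : 2 * D ≤ r := by nlinarith
    have : D ^ (i+1) = D * D ^ i := by ring
    nlinarith
  · -- compute costIdx and cost
    have hc1 : costIdx (fun i => D ^ i) 1 = 0 := by
      rw [costIdx, Nat.sInf_eq_zero]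
      left; simp
    have hcD : costIdx (fun i => D ^ i) D = 1 := by
      have hmem : 1 ∈ {i : ℕ | D ≤ D ^ i} := by simp
      have h0 : 0 ∉ {i : ℕ | D ≤ D ^ i} := by simp; linarith
      have hle : sInf {i : ℕ | D ≤ D ^ i} ≤ 1 := Nat.sInf_le hmem
      have hne : sInf {i : ℕ | D ≤ D ^ i} ≠ 0 := by
        intro h
        have := Nat.sInf_mem (⟨1, hmem⟩ : {i : ℕ | D ≤ D ^ i}.Nonempty)
        rw [h] at this
        exact h0 this
      rw [costIdx]
      omega
    have e1 : cost (fun i => D ^ i) 1 = 1 := by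
      rw [cost, hc1]; simp
    have e2 : cost (fun i => D ^ i) D = 1 + D := by
      rw [cost, hcD]
      rw [Finset.sum_range_succ, Finset.sum_range_one]
      simp
    rw [e1, e2]
    have hDne : D ≠ 0 := ne_of_gt hDpos
    have hden : (1 - 1/D) * 1 + 1/D * D = 2 - 1/D := by field_simp; ring
    have hd2 : 1 / D ≤ 1 / 2 := by
      apply div_le_div_of_nonneg_left <;> linarith
    rw [hden, div_le_iff₀ (by linarith)]
    have hRpos : (0:ℝ) < R := by linarith
    field_simp
    nlinarith
end

section
/- Let a > 1, δ ∈ [0,2), λ ∈ [1,a), j ∈ ℤ, and set û = λ·a^{j+δ}. For every s ∈ [δ,2) the search cost of the bi-infinite linear-search strategy with turn distances λ·a^{i+s} (i ∈ ℤ) for a target at distance û on the half-line explored at iterations of the parity of j equals û + 2·Σ_{i=−∞}^{j−1} λ·a^{i+s} = û + 2λ·a^{j+s}/(a−1), and its expectation over s drawn uniformly from [δ,2) satisfies (1/(2−δ))·∫_δ^2 (û + 2λ·a^{j+s}/(a−1)) ds ≤ û · (1 + 2(a² − a^δ)/(a^δ (2−δ)(a−1) ln a)). -/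
theorem stmt14 (a δ lam : ℝ) (j : ℤ) (ha : 1 < a) (hδ : δ ∈ Set.Ico (0:ℝ) 2)
    (hlam : lam ∈ Set.Ico (1:ℝ) a) :
    (∀ s ∈ Set.Ico δ 2,
        lam * a ^ ((j : ℝ) + δ) +
            2 * ∑' i : {i : ℤ // i < j}, lam * a ^ ((i.1 : ℝ) + s) =
          lam * a ^ ((j : ℝ) + δ) + 2 * lam * a ^ ((j : ℝ) + s) / (a - 1)) ∧
    (1 / (2 - δ)) * (∫ s in δ..2,
          (lam * a ^ ((j : ℝ) + δ) + 2 * lam * a ^ ((j : ℝ) + s) / (a - 1))) ≤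
      lam * a ^ ((j : ℝ) + δ) *
        (1 + 2 * (a ^ (2:ℝ) - a ^ δ) / (a ^ δ * (2 - δ) * (a - 1) * Real.log a)) := by
  have ha0 : 0 < a := by linarith
  have ha1 : a - 1 ≠ 0 := by linarith
  constructor
  · intro s _
    let e : ℕ ≃ {i : ℤ // i < j} :=
      { toFun := fun n => ⟨j - 1 - n, by omega⟩
        invFun := fun i => (j - 1 - i.1).toNat
        left_inv := fun n => by simp
        right_inv := fun i => by ext; simp; omega }
    have key : (∑' i : {i : ℤ // i < j}, lam * a ^ ((i.1 : ℝ) + s))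
        = ∑' n : ℕ, (lam * a ^ ((j : ℝ) + s) * a⁻¹) * (a⁻¹) ^ n := by
      rw [← Equiv.tsum_eq e (fun i : {i : ℤ // i < j} => lam * a ^ ((i.1 : ℝ) + s))]
      refine tsum_congr fun n => ?_
      show lam * a ^ (((j - 1 - (n:ℤ) : ℤ) : ℝ) + s) = _
      have h1 : (((j - 1 - (n:ℤ) : ℤ)) : ℝ) + s = ((j : ℝ) + s) - (1 + n) := by
        push_cast; ring
      rw [h1, Real.rpow_sub ha0,
        show ((1:ℝ) + n) = ((1 + n : ℕ) : ℝ) by push_cast; ring,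
        Real.rpow_natCast, pow_add, pow_one]
      rw [inv_pow]
      field_simp
      try ring
    rw [key, tsum_mul_left, tsum_geometric_of_lt_one (by positivity)
      (by rw [inv_lt_one_iff₀]; right; exact ha)]
    have h2 : (1 - a⁻¹)⁻¹ = a / (a - 1) := by field_simp
    rw [h2]
    field_simp
  · have hlog : Real.log a ≠ 0 := (Real.log_pos ha).ne'
    have hexp : (fun s : ℝ => a ^ s) = fun s => Real.exp (Real.log a * s) :=
      funext fun s => Real.rpow_def_of_pos ha0 s
    have hc : Continuous fun s : ℝ => a ^ s := by
      rw [hexp]; exact Real.continuous_exp.comp (continuous_const.mul continuous_id)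
    have hint : (∫ s in δ..2, a ^ s) = (a ^ (2:ℝ) - a ^ δ) / Real.log a := by
      rw [hexp, intervalIntegral.integral_comp_mul_left (fun x => Real.exp x) hlog,
        integral_exp, smul_eq_mul]
      rw [← Real.rpow_def_of_pos ha0, ← Real.rpow_def_of_pos ha0]
      field_simp
      try ring
    have hsplit : (∫ s in δ..2,
        (lam * a ^ ((j : ℝ) + δ) + 2 * lam * a ^ ((j : ℝ) + s) / (a - 1)))
        = (2 - δ) * (lam * a ^ ((j : ℝ) + δ))
          + (2 * lam * a ^ (j : ℝ) / (a - 1)) * ((a ^ (2:ℝ) - a ^ δ) / Real.log a) := by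
      have h2 : ∀ s : ℝ, lam * a ^ ((j : ℝ) + δ) + 2 * lam * a ^ ((j : ℝ) + s) / (a - 1)
          = lam * a ^ ((j : ℝ) + δ) + (2 * lam * a ^ ((j : ℝ)) / (a - 1)) * a ^ s := by
        intro s; rw [Real.rpow_add ha0 (j : ℝ) s]; ring
      simp_rw [h2]
      rw [intervalIntegral.integral_add (g := fun s : ℝ => 2 * lam * a ^ (j : ℝ) / (a - 1) * a ^ s)
        intervalIntegrable_const
        ((continuous_const.mul hc).intervalIntegrable _ _),
        intervalIntegral.integral_const, intervalIntegral.integral_const_mul, hint,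
        smul_eq_mul]

    rw [hsplit]
    apply le_of_eq
    have h2δ : (2 : ℝ) - δ ≠ 0 := by have := hδ.2; intro h; linarith
    have hδa : a ^ δ ≠ 0 := (Real.rpow_pos_of_pos ha0 δ).ne'
    have hja : a ^ ((j:ℝ) + δ) = a ^ (j:ℝ) * a ^ δ := Real.rpow_add ha0 _ _
    rw [hja]
    field_simp
end
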